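/- arXiv:1403.4993 — 3 statements merged into one kernel-verified Lean document; each statement's English description precedes it below -/
import Mathlib

section
/- The real symplectic group Sp_{2n}(\mathbb{R}), realized as the intersection of Sp_{2n}(\mathbb{C}) with SU(n,n) inside GL_{2n}(\mathbb{C}), acts transitively on the set D_+ of h-positive complex lines in \mathbb{P}(\mathbb{C}^{2n}), where h is a Hermitian form of signature (n,n) compatible with the symplectic form. -/
open scoped ComplexConjugate

/-- The complex bilinear form `b(z,w) = zᵗw` on `ℂ^{2n}`. -/
noncomputable def bform (n : ℕ) (z w : Fin (2 * n) → ℂ) : ℂ := ∑ j, z j * w j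

/-- The map `J` with `J(eᵢ) = e_{n+i}` for `i ≤ n` and `J(eᵢ) = -e_{i-n}` for `i > n`. -/
noncomputable def Jmap (n : ℕ) (z : Fin (2 * n) → ℂ) : Fin (2 * n) → ℂ := fun j =>
  if h : (j : ℕ) < n then -z ⟨(j : ℕ) + n, by omega⟩
  else z ⟨(j : ℕ) - n, by omega⟩

/-- The map `E = Id_n ⊕ (-Id_n)`. -/
noncomputable def Emap (n : ℕ) (z : Fin (2 * n) → ℂ) : Fin (2 * n) → ℂ := fun j =>
  if (j : ℕ) < n then z j else -z j

/-- The complex symplectic form `ω(z,w) = zᵗ J w`. -/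
noncomputable def ωform (n : ℕ) (z w : Fin (2 * n) → ℂ) : ℂ := ∑ j, z j * Jmap n w j

/-- The Hermitian form `h(z,w) = zᵗ E conj w` of signature `(n,n)`. -/
noncomputable def hform (n : ℕ) (z w : Fin (2 * n) → ℂ) : ℂ := ∑ j, z j * Emap n (fun i => conj (w i)) j

/-- The antilinear map `φ(w) = -J E conj w`. -/
noncomputable def φmap (n : ℕ) (w : Fin (2 * n) → ℂ) : Fin (2 * n) → ℂ :=
  -Jmap n (Emap n (fun i => conj (w i)))

namespace Stmt8

/-- The index swap `j ↦ j ± n`. -/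
def swf (n : ℕ) (j : Fin (2 * n)) : Fin (2 * n) :=
  if h : (j : ℕ) < n then ⟨(j : ℕ) + n, by omega⟩ else ⟨(j : ℕ) - n, by omega⟩

lemma coe_swf (n : ℕ) (j : Fin (2 * n)) :
    ((swf n j : Fin (2 * n)) : ℕ) = if (j : ℕ) < n then (j : ℕ) + n else (j : ℕ) - n := by
  unfold swf; split <;> rfl

lemma swf_swf (n : ℕ) (j : Fin (2 * n)) : swf n (swf n j) = j := by
  have hj := j.isLt
  ext
  rw [coe_swf, coe_swf]
  split_ifs <;> omega

/-- The swap as an equiv. -/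
def swe (n : ℕ) : Equiv (Fin (2 * n)) (Fin (2 * n)) := ⟨swf n, swf n, swf_swf n, swf_swf n⟩

/-- Sign function. -/
def eps (n : ℕ) (j : Fin (2 * n)) : ℂ := if (j : ℕ) < n then -1 else 1

lemma eps_swf (n : ℕ) (j : Fin (2 * n)) : eps n (swf n j) = -eps n j := by
  have hj := j.isLt
  unfold eps
  rw [coe_swf]
  split_ifs <;> first | (exfalso; omega) | norm_num

lemma eps_mul_self (n : ℕ) (j : Fin (2 * n)) : eps n j * eps n j = 1 := by
  unfold eps; split <;> norm_num

lemma conj_eps (n : ℕ) (j : Fin (2 * n)) : conj (eps n j) = eps n j := by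
  unfold eps; split <;> simp

lemma Jmap_eq (n : ℕ) (w : Fin (2 * n) → ℂ) (j : Fin (2 * n)) :
    Jmap n w j = eps n j * w (swf n j) := by
  unfold Jmap eps swf
  by_cases h : (j : ℕ) < n
  · rw [dif_pos h, if_pos h, dif_pos h]; ring
  · rw [dif_neg h, if_neg h, dif_neg h]; ring

lemma Emap_eq (n : ℕ) (w : Fin (2 * n) → ℂ) (j : Fin (2 * n)) :
    Emap n w j = -eps n j * w j := by
  unfold Emap eps
  by_cases h : (j : ℕ) < n
  · rw [if_pos h, if_pos h]; ring
  · rw [if_neg h, if_neg h]; ring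

lemma omega_eq (n : ℕ) (z w : Fin (2 * n) → ℂ) :
    ωform n z w = ∑ j, eps n j * z j * w (swf n j) := by
  unfold ωform
  refine Finset.sum_congr rfl fun j _ => ?_
  rw [Jmap_eq]; ring

lemma phi_eq (n : ℕ) (w : Fin (2 * n) → ℂ) (j : Fin (2 * n)) :
    φmap n w j = -conj (w (swf n j)) := by
  unfold φmap
  show -(Jmap n (Emap n fun i => conj (w i)) j) = _
  rw [Jmap_eq, Emap_eq, eps_swf]
  linear_combination (-conj (w (swf n j))) * eps_mul_self n j

lemma h_eq (n : ℕ) (z w : Fin (2 * n) → ℂ) :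
    hform n z w = ωform n z (φmap n w) := by
  unfold hform
  rw [omega_eq]
  refine Finset.sum_congr rfl fun j _ => ?_
  rw [Emap_eq, phi_eq, swf_swf]
  ring

end Stmt8

section Stmt8b
open Stmt8

variable (n : ℕ)

lemma omega_add_left (x y w : Fin (2 * n) → ℂ) :
    ωform n (x + y) w = ωform n x w + ωform n y w := by
  simp only [omega_eq, Pi.add_apply, ← Finset.sum_add_distrib]
  exact Finset.sum_congr rfl fun j _ => by ring

lemma omega_add_right (x y w : Fin (2 * n) → ℂ) :
    ωform n w (x + y) = ωform n w x + ωform n w y := by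
  simp only [omega_eq, Pi.add_apply, ← Finset.sum_add_distrib]
  exact Finset.sum_congr rfl fun j _ => by ring

lemma omega_smul_left (c : ℂ) (x w : Fin (2 * n) → ℂ) :
    ωform n (c • x) w = c * ωform n x w := by
  simp only [omega_eq, Pi.smul_apply, smul_eq_mul, Finset.mul_sum]
  exact Finset.sum_congr rfl fun j _ => by ring

lemma omega_smul_right (c : ℂ) (x w : Fin (2 * n) → ℂ) :
    ωform n w (c • x) = c * ωform n w x := by
  simp only [omega_eq, Pi.smul_apply, smul_eq_mul, Finset.mul_sum]
  exact Finset.sum_congr rfl fun j _ => by ring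

lemma omega_sub_left (x y w : Fin (2 * n) → ℂ) :
    ωform n (x - y) w = ωform n x w - ωform n y w := by
  simp only [omega_eq, Pi.sub_apply, ← Finset.sum_sub_distrib]
  exact Finset.sum_congr rfl fun j _ => by ring

lemma omega_sub_right (x y w : Fin (2 * n) → ℂ) :
    ωform n w (x - y) = ωform n w x - ωform n w y := by
  simp only [omega_eq, Pi.sub_apply, ← Finset.sum_sub_distrib]
  exact Finset.sum_congr rfl fun j _ => by ring

lemma omega_antisymm (x y : Fin (2 * n) → ℂ) :
    ωform n y x = -ωform n x y := by
  rw [omega_eq, omega_eq, ← Finset.sum_neg_distrib]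
  refine Fintype.sum_equiv (swe n) _ _ fun j => ?_
  show eps n j * y j * x (swf n j) =
    -(eps n (swf n j) * x (swf n j) * y (swf n (swf n j)))
  rw [swf_swf, eps_swf]
  ring

lemma omega_self (x : Fin (2 * n) → ℂ) : ωform n x x = 0 := by
  have h := omega_antisymm n x x
  linear_combination h / 2

lemma omega_zero_left (w : Fin (2 * n) → ℂ) : ωform n 0 w = 0 := by
  simp [omega_eq]

lemma phi_add (x y : Fin (2 * n) → ℂ) :
    φmap n (x + y) = φmap n x + φmap n y := by
  funext j
  simp only [Pi.add_apply, phi_eq, map_add]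
  ring

lemma phi_sub (x y : Fin (2 * n) → ℂ) :
    φmap n (x - y) = φmap n x - φmap n y := by
  funext j
  simp only [Pi.sub_apply, phi_eq, map_sub]
  ring

lemma phi_smul (c : ℂ) (x : Fin (2 * n) → ℂ) :
    φmap n (c • x) = conj c • φmap n x := by
  funext j
  simp only [Pi.smul_apply, smul_eq_mul, phi_eq, map_mul]
  ring

lemma phi_phi (x : Fin (2 * n) → ℂ) : φmap n (φmap n x) = x := by
  funext j
  simp only [phi_eq, swf_swf, map_neg, RingHom.id_apply, Complex.conj_conj, neg_neg]

lemma omega_phi_phi (x y : Fin (2 * n) → ℂ) :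
    ωform n (φmap n x) (φmap n y) = -conj (ωform n x y) := by
  rw [omega_eq, omega_eq, map_sum, ← Finset.sum_neg_distrib]
  refine Fintype.sum_equiv (swe n) _ _ fun j => ?_
  show eps n j * φmap n x j * φmap n y (swf n j) =
    -conj (eps n (swf n j) * x (swf n j) * y (swf n (swf n j)))
  simp only [swf_swf, eps_swf, phi_eq, map_mul, map_neg, conj_eps]
  ring

/-- ω is imaginary-valued on the real form. -/
lemma omega_imag (u v : Fin (2 * n) → ℂ) (hu : φmap n u = u) (hv : φmap n v = v) :
    conj (ωform n u v) = -ωform n u v := by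
  have h := omega_phi_phi n u v
  rw [hu, hv] at h
  linear_combination h

lemma conj_inv_imag (m : ℂ) (hm : conj m = -m) : conj m⁻¹ = -m⁻¹ := by
  rw [map_inv₀, hm]
  simp [inv_neg]

/-- Nondegeneracy of ω. -/
lemma omega_nondeg (u : Fin (2 * n) → ℂ) (h : ∀ w, ωform n u w = 0) : u = 0 := by
  funext j
  have hj := h (fun k => if k = swf n j then 1 else 0)
  rw [omega_eq] at hj
  rw [Finset.sum_eq_single j] at hj
  · simp only [swf_swf] at hj
    have : eps n j ≠ 0 := by unfold eps; split <;> norm_num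
    simpa [this] using hj
  · intro b _ hb
    have : swf n b ≠ swf n j := fun hc => hb (by rw [← swf_swf n b, hc, swf_swf])
    simp [this]
  · simp

end Stmt8b

section Stmt8c
open Stmt8

variable (n : ℕ)

/-- Membership in the group: preserves ω and commutes with φ. -/
def Good (n : ℕ) (T : (Fin (2 * n) → ℂ) ≃ₗ[ℂ] (Fin (2 * n) → ℂ)) : Prop :=
  (∀ u v, ωform n (T u) (T v) = ωform n u v) ∧ ∀ x, T (φmap n x) = φmap n (T x)

lemma good_refl : Good n (LinearEquiv.refl ℂ (Fin (2 * n) → ℂ)) := by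
  constructor <;> intros <;> rfl

lemma good_trans {T₁ T₂ : (Fin (2 * n) → ℂ) ≃ₗ[ℂ] (Fin (2 * n) → ℂ)}
    (h₁ : Good n T₁) (h₂ : Good n T₂) : Good n (T₁.trans T₂) := by
  constructor
  · intro u v
    simp only [LinearEquiv.trans_apply, h₂.1, h₁.1]
  · intro x
    simp only [LinearEquiv.trans_apply, h₁.2, h₂.2]

lemma good_h {T : (Fin (2 * n) → ℂ) ≃ₗ[ℂ] (Fin (2 * n) → ℂ)} (hT : Good n T) :
    ∀ u v, hform n (T u) (T v) = hform n u v := by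
  intro u v
  rw [h_eq, h_eq, ← hT.2, hT.1]

/-- The symplectic transvection `x ↦ x + l·ω(x,a)·a`. -/
noncomputable def tv (a : Fin (2 * n) → ℂ) (l : ℂ) :
    (Fin (2 * n) → ℂ) ≃ₗ[ℂ] (Fin (2 * n) → ℂ) where
  toFun x := x + (l * ωform n x a) • a
  invFun x := x - (l * ωform n x a) • a
  map_add' x y := by
    show (x + y) + (l * ωform n (x + y) a) • a
      = (x + (l * ωform n x a) • a) + (y + (l * ωform n y a) • a)
    rw [omega_add_left]
    module
  map_smul' c x := by
    show (c • x) + (l * ωform n (c • x) a) • a = c • (x + (l * ωform n x a) • a)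
    rw [omega_smul_left]
    module
  left_inv x := by
    have h : ωform n (x + (l * ωform n x a) • a) a = ωform n x a := by
      rw [omega_add_left, omega_smul_left, omega_self]; ring
    simp only [h]
    module
  right_inv x := by
    have h : ωform n (x - (l * ωform n x a) • a) a = ωform n x a := by
      rw [omega_sub_left, omega_smul_left, omega_self]; ring
    simp only [h]
    module

lemma tv_apply (a : Fin (2 * n) → ℂ) (l : ℂ) (x : Fin (2 * n) → ℂ) :
    tv n a l x = x + (l * ωform n x a) • a := rfl

lemma tv_good (a : Fin (2 * n) → ℂ) (l : ℂ) (ha : φmap n a = a) (hl : conj l = -l) :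
    Good n (tv n a l) := by
  constructor
  · intro u v
    simp only [tv_apply, omega_add_left, omega_add_right, omega_smul_left,
      omega_smul_right, omega_self, mul_zero, zero_mul, add_zero, zero_add]
    linear_combination (l * ωform n u a) * omega_antisymm n v a
  · intro x
    rw [tv_apply, tv_apply, phi_add, phi_smul, ha]
    have h1 : ωform n (φmap n x) a = -conj (ωform n x a) := by
      conv_lhs => rw [← ha]
      rw [omega_phi_phi]
    rw [h1, map_mul, hl]
    congr 1
    ring_nf

end Stmt8c

section Stmt8d
open Stmt8

variable (n : ℕ)

/-- Nondegeneracy of ω on the real form. -/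
lemma exists_pair (u : Fin (2 * n) → ℂ) (hu : φmap n u = u) (hu0 : u ≠ 0) :
    ∃ w, φmap n w = w ∧ ωform n u w ≠ 0 := by
  have hx : ∃ x, ωform n u x ≠ 0 := by
    by_contra hc
    push_neg at hc
    exact hu0 (omega_nondeg n u hc)
  obtain ⟨x, hx⟩ := hx
  by_cases h1 : ωform n u (x + φmap n x) ≠ 0
  · refine ⟨x + φmap n x, ?_, h1⟩
    rw [phi_add, phi_phi]
    abel
  · push_neg at h1
    refine ⟨Complex.I • (x - φmap n x), ?_, ?_⟩
    · rw [phi_smul, phi_sub, phi_phi, Complex.conj_I]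
      module
    · rw [omega_smul_right, omega_sub_right]
      rw [omega_add_right] at h1
      intro hc
      apply hx
      have h2 : ωform n u (φmap n x) = -ωform n u x := by linear_combination h1
      rw [h2] at hc
      simp only [sub_neg_eq_add] at hc
      rcases mul_eq_zero.mp hc with h | h
      · exact absurd h Complex.I_ne_zero
      · linear_combination h / 2

/-- One transvection moves `u` to `u'` when `ω(u,u') ≠ 0`. -/
lemma lemA1 (u u' : Fin (2 * n) → ℂ) (hu : φmap n u = u) (hu' : φmap n u' = u')
    (h : ωform n u u' ≠ 0) :
    ∃ T, Good n T ∧ T u = u' := by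
  set a := u' - u with hadef
  have ha : φmap n a = a := by rw [hadef, phi_sub, hu, hu']
  have hua : ωform n u a = ωform n u u' := by
    rw [hadef, omega_sub_right, omega_self]; ring
  set l := (ωform n u a)⁻¹ with hldef
  have hl : conj l = -l := by
    refine conj_inv_imag _ (omega_imag n u a hu ha)
  refine ⟨tv n a l, tv_good n a l ha hl, ?_⟩
  rw [tv_apply, hldef, inv_mul_cancel₀ (by rw [hua]; exact h), one_smul, hadef]
  abel

/-- Transitivity on nonzero real vectors. -/
lemma lemA (u u' : Fin (2 * n) → ℂ) (hu : φmap n u = u) (hu' : φmap n u' = u')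
    (hu0 : u ≠ 0) (hu'0 : u' ≠ 0) :
    ∃ T, Good n T ∧ T u = u' := by
  by_cases h : ωform n u u' ≠ 0
  · exact lemA1 n u u' hu hu' h
  push_neg at h
  by_cases he : u = u'
  · exact ⟨LinearEquiv.refl ℂ _, good_refl n, by rw [he]; rfl⟩
  -- find intermediate w
  obtain ⟨w₁, hw₁, hww₁⟩ := exists_pair n u hu hu0
  obtain ⟨w₂, hw₂, hww₂⟩ := exists_pair n u' hu' hu'0
  have key : ∃ w, φmap n w = w ∧ ωform n u w ≠ 0 ∧ ωform n w u' ≠ 0 := by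
    by_cases h1 : ωform n w₁ u' ≠ 0
    · exact ⟨w₁, hw₁, hww₁, h1⟩
    push_neg at h1
    by_cases h2 : ωform n u w₂ ≠ 0
    · refine ⟨w₂, hw₂, h2, ?_⟩
      rw [omega_antisymm]
      simpa using hww₂
    push_neg at h2
    refine ⟨w₁ + w₂, by rw [phi_add, hw₁, hw₂], ?_, ?_⟩
    · rw [omega_add_right, h2, add_zero]
      exact hww₁
    · rw [omega_add_left, h1, zero_add, omega_antisymm]
      simpa using hww₂
  obtain ⟨w, hw, hw1, hw2⟩ := key
  obtain ⟨T₁, hT₁, hT₁u⟩ := lemA1 n u w hu hw hw1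
  obtain ⟨T₂, hT₂, hT₂w⟩ := lemA1 n w u' hw hu' hw2
  refine ⟨T₁.trans T₂, good_trans n hT₁ hT₂, ?_⟩
  rw [LinearEquiv.trans_apply, hT₁u, hT₂w]

/-- Transitivity on second members of hyperbolic pairs, fixing the first. -/
lemma lemB (u v v' : Fin (2 * n) → ℂ) (hu : φmap n u = u) (hv : φmap n v = v)
    (hv' : φmap n v' = v') (hs : ωform n u v = ωform n u v') (hs0 : ωform n u v ≠ 0) :
    ∃ T, Good n T ∧ T u = u ∧ T v = v' := by
  by_cases hvv : ωform n v v' ≠ 0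
  · set a := v' - v with hadef
    have ha : φmap n a = a := by rw [hadef, phi_sub, hv, hv']
    have hva : ωform n v a = ωform n v v' := by
      rw [hadef, omega_sub_right, omega_self]; ring
    set l := (ωform n v a)⁻¹ with hldef
    have hl : conj l = -l := conj_inv_imag _ (omega_imag n v a hv ha)
    refine ⟨tv n a l, tv_good n a l ha hl, ?_, ?_⟩
    · rw [tv_apply]
      have hua : ωform n u a = 0 := by
        rw [hadef, omega_sub_right, hs]; ring
      rw [hua]
      simp
    · rw [tv_apply, hldef, inv_mul_cancel₀ (by rw [hva]; exact hvv), one_smul, hadef]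
      abel
  · push_neg at hvv
    -- go through w = u + v
    set w := u + v with hwdef
    have hww : φmap n w = w := by rw [hwdef, phi_add, hu, hv]
    -- first transvection along a₁ = u sends v to w, fixes u
    have hvu : ωform n v u ≠ 0 := by
      rw [omega_antisymm]
      simpa using hs0
    set l₁ := (ωform n v u)⁻¹ with hl₁def
    have hl₁ : conj l₁ = -l₁ := conj_inv_imag _ (omega_imag n v u hv hu)
    have hgood₁ := tv_good n u l₁ hu hl₁
    have hT₁v : tv n u l₁ v = w := by
      rw [tv_apply, hl₁def, inv_mul_cancel₀ hvu, one_smul, hwdef]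
      abel
    have hT₁u : tv n u l₁ u = u := by
      rw [tv_apply, omega_self]
      simp
    -- second transvection along a₂ = v' - w sends w to v', fixes u
    set a₂ := v' - w with ha₂def
    have ha₂ : φmap n a₂ = a₂ := by rw [ha₂def, phi_sub, hv', hww]
    have hwa₂ : ωform n w a₂ = ωform n u v := by
      rw [ha₂def, omega_sub_right, omega_self, hwdef, omega_add_left, hvv,
        ← hs]
      ring
    have hwa₂0 : ωform n w a₂ ≠ 0 := by rw [hwa₂]; exact hs0
    set l₂ := (ωform n w a₂)⁻¹ with hl₂def
    have hl₂ : conj l₂ = -l₂ := conj_inv_imag _ (omega_imag n w a₂ hww ha₂)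
    have hgood₂ := tv_good n a₂ l₂ ha₂ hl₂
    have hT₂w : tv n a₂ l₂ w = v' := by
      rw [tv_apply, hl₂def, inv_mul_cancel₀ hwa₂0, one_smul, ha₂def]
      abel
    have hT₂u : tv n a₂ l₂ u = u := by
      rw [tv_apply]
      have : ωform n u a₂ = 0 := by
        rw [ha₂def, omega_sub_right, hwdef, omega_add_right, omega_self, hs]
        ring
      rw [this]
      simp
    refine ⟨(tv n u l₁).trans (tv n a₂ l₂), good_trans n hgood₁ hgood₂, ?_, ?_⟩
    · rw [LinearEquiv.trans_apply, hT₁u, hT₂u]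
    · rw [LinearEquiv.trans_apply, hT₁v, hT₂w]

end Stmt8d

section Stmt8e
open Stmt8

variable (n : ℕ)

/-- Decomposition of a vector into real and imaginary parts w.r.t. the real structure φ. -/
lemma decomp (a : Fin (2 * n) → ℂ) (r : ℂ) (ha : hform n a a = r) :
    ∃ u v, φmap n u = u ∧ φmap n v = v ∧ a = u + Complex.I • v ∧
      ωform n u v = Complex.I * r / 2 := by
  have h3 : ωform n a (φmap n a) = r := by rw [← h_eq]; exact ha
  refine ⟨(1/2 : ℂ) • (a + φmap n a), (-(Complex.I)/2) • (a - φmap n a), ?_, ?_, ?_, ?_⟩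
  · rw [phi_smul, phi_add, phi_phi]
    have hcj : conj ((1:ℂ)/2) = 1/2 := by norm_num [Complex.ext_iff]
    rw [hcj]
    module
  · rw [phi_smul, phi_sub, phi_phi]
    have hcj : conj (-(Complex.I)/2) = Complex.I/2 := by
      simp [map_div₀, Complex.conj_I, map_ofNat]
    rw [hcj]
    module
  · rw [smul_smul]
    have hI : Complex.I * (-(Complex.I)/2) = 1/2 := by
      linear_combination (-1/2 : ℂ) * Complex.I_mul_I
    rw [hI]
    module
  · simp only [omega_smul_left, omega_smul_right, omega_add_left, omega_sub_right,
      omega_self]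
    have h1 : ωform n (φmap n a) a = -ωform n a (φmap n a) :=
      omega_antisymm n a (φmap n a)
    have h2 : ωform n (φmap n a) (φmap n a) = 0 := omega_self n _
    rw [h1, h3]
    ring

end Stmt8e


/-- The real symplectic group `Sp_{2n}(ℝ)`, realized as the group of complex
linear automorphisms of `ℂ^{2n}` preserving both the symplectic form `ω` and the Hermitian
form `h` of signature `(n,n)`, acts transitively on the set `D₊` of `h`-positive complex
lines: for any two `h`-positive lines (spanned by `z` and `z'`) there is such an
automorphism `T` carrying the first line onto the second. -/
theorem stmt8 (n : ℕ) (z z' : Fin (2 * n) → ℂ)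
    (hz : ∃ r : ℝ, 0 < r ∧ hform n z z = r)
    (hz' : ∃ r : ℝ, 0 < r ∧ hform n z' z' = r) :
    ∃ T : (Fin (2 * n) → ℂ) ≃ₗ[ℂ] (Fin (2 * n) → ℂ),
      (∀ u v, ωform n (T u) (T v) = ωform n u v) ∧
      (∀ u v, hform n (T u) (T v) = hform n u v) ∧
      ∃ c : ℂ, c ≠ 0 ∧ T z = c • z' := by
  open Stmt8 in
  obtain ⟨r, hr0, hzz⟩ := hz
  obtain ⟨r', hr'0, hz'z'⟩ := hz'
  set c : ℝ := Real.sqrt (r / r') with hcdef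
  have hcpos : 0 < c := Real.sqrt_pos.mpr (div_pos hr0 hr'0)
  set z'' : Fin (2 * n) → ℂ := (c : ℂ) • z' with hz''def
  have hz''z'' : hform n z'' z'' = (r : ℝ) := by
    rw [hz''def, h_eq, phi_smul, omega_smul_left, omega_smul_right, ← h_eq,
      Complex.conj_ofReal, hz'z']
    have hcc : c * c * r' = r := by
      have hmul : c * c = r / r' := Real.mul_self_sqrt (le_of_lt (div_pos hr0 hr'0))
      rw [hmul]
      field_simp
    have hccC : (c : ℂ) * (c : ℂ) * (r' : ℂ) = (r : ℂ) := by exact_mod_cast hcc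
    push_cast
    linear_combination hccC
  obtain ⟨u, v, hu, hv, hzuv, hωuv⟩ := decomp n z (r : ℂ) hzz
  obtain ⟨u'', v'', hu'', hv'', hz''uv, hωuv''⟩ := decomp n z'' (r : ℂ) hz''z''
  have hs0 : (Complex.I * (r : ℂ) / 2) ≠ 0 := by
    have hrne : (r : ℂ) ≠ 0 := by
      exact_mod_cast Complex.ofReal_ne_zero.mpr hr0.ne'
    simp [Complex.I_ne_zero, hrne]
  have hu0 : u ≠ 0 := by
    intro h
    apply hs0
    rw [← hωuv, h, omega_zero_left]
  have hu''0 : u'' ≠ 0 := by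
    intro h
    apply hs0
    rw [← hωuv'', h, omega_zero_left]
  obtain ⟨T₁, hT₁, hT₁u⟩ := lemA n u u'' hu hu'' hu0 hu''0
  set v₁ := T₁ v with hv₁def
  have hφv₁ : φmap n v₁ = v₁ := by
    rw [hv₁def, ← hT₁.2, hv]
  have hωv₁ : ωform n u'' v₁ = ωform n u'' v'' := by
    have step : ωform n u'' v₁ = ωform n u v := by rw [hv₁def, ← hT₁u, hT₁.1]
    rw [step, hωuv, hωuv'']
  have hωv₁0 : ωform n u'' v₁ ≠ 0 := by
    rw [hωv₁, hωuv'']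
    exact hs0
  obtain ⟨T₂, hT₂, hT₂u, hT₂v⟩ := lemB n u'' v₁ v'' hu'' hφv₁ hv'' hωv₁ hωv₁0
  refine ⟨T₁.trans T₂, (good_trans n hT₁ hT₂).1, good_h n (good_trans n hT₁ hT₂), (c : ℂ),
    Complex.ofReal_ne_zero.mpr hcpos.ne', ?_⟩
  have : (T₁.trans T₂) z = u'' + Complex.I • v'' := by
    rw [hzuv, map_add, map_smul, LinearEquiv.trans_apply, LinearEquiv.trans_apply,
      hT₁u, hT₂u, ← hv₁def, hT₂v]
  rw [this, ← hz''uv, hz''def]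
end

section
/- The complex orthogonal group SO_{2n}(\mathbb{C}) acts transitively on the set of b-isotropic n-dimensional subspaces of \mathbb{C}^{2n} lying in a fixed connected component of the orthogonal Grassmannian; moreover the subgroup SO_{2n-1}(\mathbb{C}) fixing the vector e_{2n} already acts transitively on this set. -/
/-- The standard symmetric bilinear form `b(z,w) = zᵗw` on `ℂ^m`. -/
noncomputable def bf (m : ℕ) (z w : Fin m → ℂ) : ℂ := ∑ j, z j * w j

noncomputable def Bf (m : ℕ) : (Fin m → ℂ) →ₗ[ℂ] (Fin m → ℂ) →ₗ[ℂ] ℂ :=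
  LinearMap.mk₂ ℂ (bf m)
    (fun x y z => by simp [bf, add_mul, Finset.sum_add_distrib])
    (fun c x y => by simp [bf, Finset.mul_sum, mul_assoc])
    (fun x y z => by simp [bf, mul_add, Finset.sum_add_distrib])
    (fun c x y => by simp [bf, Finset.mul_sum]; ring_nf; simp [mul_comm, mul_left_comm])
lemma Bf_apply (m : ℕ) (x y : Fin m → ℂ) : Bf m x y = bf m x y := rfl
lemma bf_symm (m : ℕ) (x y : Fin m → ℂ) : bf m x y = bf m y x := by simp [bf, mul_comm]
lemma bf_single (m : ℕ) (x : Fin m → ℂ) (j : Fin m) : bf m x (Pi.single j 1) = x j := by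
  simp [bf, Pi.single_apply]
lemma Bf_nondeg (m : ℕ) : LinearMap.BilinForm.Nondegenerate (Bf m) := by
  constructor
  · intro x hx; funext j; simpa [Bf_apply, bf_single] using hx (Pi.single j 1)
  · intro x hx; funext j
    have := hx (Pi.single j 1)
    rw [Bf_apply, bf_symm, bf_single] at this
    simpa using this
lemma Bf_refl (m : ℕ) : LinearMap.IsRefl (Bf m) := by
  intro x y h; rwa [Bf_apply, bf_symm]

open Module Submodule
open scoped Matrix

/-- DUAL: given an independent family, can prescribe pairings. -/
lemma exists_dual (m : ℕ) {ι : Type} [Fintype ι] [DecidableEq ι] {x : ι → (Fin m → ℂ)}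
    (hx : LinearIndependent ℂ x) (t : ι → ℂ) :
    ∃ v, ∀ i, bf m v (x i) = t i := by
  classical
  set L : (Fin m → ℂ) →ₗ[ℂ] (ι → ℂ) :=
    { toFun := fun v i => bf m v (x i)
      map_add' := by intro a b; funext i; simp [← Bf_apply, map_add]
      map_smul' := by intro c a; funext i; simp [← Bf_apply, map_smul] } with hL
  have hker : LinearMap.ker L = LinearMap.BilinForm.orthogonal (Bf m) (span ℂ (Set.range x)) := by
    ext v
    simp only [LinearMap.mem_ker, hL, LinearMap.coe_mk, AddHom.coe_mk,
      LinearMap.BilinForm.mem_orthogonal_iff]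
    constructor
    · intro h u hu
      have : ∀ u ∈ Set.range x, (Bf m) u v = 0 := by
        rintro _ ⟨i, rfl⟩
        rw [Bf_apply, bf_symm]
        exact congrFun h i
      refine span_induction this (by simp [LinearMap.BilinForm.isOrtho_def])
        (fun a b _ _ ha hb => by
          rw [map_add, LinearMap.add_apply, ha, hb, add_zero])
        (fun c a _ ha => by
          rw [map_smul, LinearMap.smul_apply, ha, smul_zero]) hu
    · intro h
      funext i
      have := h (x i) (subset_span ⟨i, rfl⟩)
      simp only [LinearMap.BilinForm.isOrtho_def, Bf_apply] at this
      rw [bf_symm] at this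
      show bf m v (x i) = 0
      exact this
  have hsurj : Function.Surjective L := by
    rw [← LinearMap.range_eq_top]
    apply Submodule.eq_top_of_finrank_eq
    have h1 : finrank ℂ (LinearMap.ker L) = m - Fintype.card ι := by
      rw [hker, LinearMap.BilinForm.finrank_orthogonal (Bf_nondeg m),
        finrank_span_eq_card hx]
      simp
    have h2 := LinearMap.finrank_range_add_finrank_ker L
    have hcard : Fintype.card ι ≤ m := by
      have := hx.fintype_card_le_finrank
      simpa using this
    rw [h1] at h2
    simp only [finrank_pi, Fintype.card_fin] at h2 ⊢
    omega
  obtain ⟨v, hv⟩ := hsurj t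
  exact ⟨v, fun i => congrFun hv i⟩

lemma bf_zero_left (m : ℕ) (w : Fin m → ℂ) : bf m 0 w = 0 := by simp [bf]
lemma bf_zero_right (m : ℕ) (w : Fin m → ℂ) : bf m w 0 = 0 := by simp [bf]


section corr
variable (m : ℕ) {ι : Type} [Fintype ι] [DecidableEq ι]

lemma bf_sum_left {κ : Type} (s : Finset κ) (f : κ → (Fin m → ℂ)) (w : Fin m → ℂ) :
    bf m (∑ i ∈ s, f i) w = ∑ i ∈ s, bf m (f i) w := by
  simp only [← Bf_apply]
  rw [map_sum]
  simp

lemma bf_sum_right {κ : Type} (s : Finset κ) (f : κ → (Fin m → ℂ)) (w : Fin m → ℂ) :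
    bf m w (∑ i ∈ s, f i) = ∑ i ∈ s, bf m w (f i) := by
  rw [bf_symm, bf_sum_left]
  simp [bf_symm]

lemma bf_smul_left (c : ℂ) (x w : Fin m → ℂ) : bf m (c • x) w = c * bf m x w := by
  simp only [← Bf_apply, map_smul]; rfl

lemma bf_smul_right (c : ℂ) (x w : Fin m → ℂ) : bf m w (c • x) = c * bf m w x := by
  rw [bf_symm, bf_smul_left, bf_symm]

lemma bf_sub_left (x y w : Fin m → ℂ) : bf m (x - y) w = bf m x w - bf m y w := by
  simp only [← Bf_apply, map_sub]; rfl

lemma bf_sub_right (x y w : Fin m → ℂ) : bf m w (x - y) = bf m w x - bf m w y := by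
  rw [bf_symm, bf_sub_left, bf_symm m x w, bf_symm m y w]

lemma bf_add_left (x y w : Fin m → ℂ) : bf m (x + y) w = bf m x w + bf m y w := by
  simp only [← Bf_apply, map_add]; rfl

lemma bf_add_right (x y w : Fin m → ℂ) : bf m w (x + y) = bf m w x + bf m w y := by
  rw [bf_symm, bf_add_left, bf_symm m x w, bf_symm m y w]

/-- CORR: correct a raw dual family into an isotropic dual family. -/
lemma corr {u y : ι → (Fin m → ℂ)}
    (hu : ∀ i j, bf m (u i) (u j) = 0)
    (hyu : ∀ j i, bf m (y j) (u i) = if j = i then 1 else 0) :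
    ∃ z : ι → (Fin m → ℂ),
      (∀ j i, bf m (z j) (u i) = if j = i then 1 else 0) ∧
      (∀ j k, bf m (z j) (z k) = 0) ∧
      (∀ j (v : Fin m → ℂ), (∀ i, bf m (u i) v = 0) → bf m (y j) v = 0 → bf m (z j) v = 0) := by
  classical
  set g : ι → ι → ℂ := fun j i => bf m (y j) (y i) with hg
  set z : ι → (Fin m → ℂ) := fun j => y j - (1/2 : ℂ) • ∑ i, g j i • u i with hz
  have hzw : ∀ j w, bf m (z j) w = bf m (y j) w - (1/2) * ∑ i, g j i * bf m (u i) w := by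
    intro j w
    rw [hz]
    simp only [bf_sub_left, bf_smul_left, bf_sum_left]
  refine ⟨z, ?_, ?_, ?_⟩
  · intro j i
    rw [hzw, hyu]
    simp [hu]
  · intro j k
    rw [hzw]
    have h1 : bf m (y j) (z k) = g j k - (1/2) * g k j := by
      rw [hz]
      simp only [bf_sub_right, bf_smul_right, bf_sum_right]
      have : ∑ x, g k x * bf m (y j) (u x) = g k j := by
        simp [hyu, mul_ite, Finset.sum_ite_eq]
      rw [this]
    have h2 : ∀ i, bf m (u i) (z k) = if k = i then 1 else 0 := by
      intro i
      rw [hz]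
      simp only [bf_sub_right, bf_smul_right, bf_sum_right]
      have : ∑ i', g k i' * bf m (u i) (u i') = 0 := by simp [hu]
      rw [this, bf_symm, hyu]
      ring
    rw [h1]
    have h3 : ∑ i, g j i * bf m (u i) (z k) = g j k := by
      simp only [h2]
      simp [mul_ite, Finset.sum_ite_eq', eq_comm]
    rw [h3]
    have hsymm : g j k = g k j := bf_symm m (y j) (y k)
    rw [hsymm]; ring
  · intro j v huv hyv
    rw [hzw, hyv]
    simp [huv]
end corr

section hyp
variable (m : ℕ) {ι : Type} [Fintype ι] [DecidableEq ι]

/-- HYP: a hyperbolic family is a basis. -/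
lemma hyp_basis {n : ℕ} (hn : 0 < n) (hcard : Fintype.card ι = n) (hm : m = 2 * n)
    {l r : ι → (Fin m → ℂ)}
    (hll : ∀ i j, bf m (l i) (l j) = 0)
    (hrr : ∀ i j, bf m (r i) (r j) = 0)
    (hlr : ∀ i j, bf m (l i) (r j) = if i = j then 1 else 0) :
    ∃ BV : Basis (ι ⊕ ι) ℂ (Fin m → ℂ), ⇑BV = Sum.elim l r := by
  classical
  haveI : Nonempty ι := Fintype.card_pos_iff.mp (by omega)
  set v : ι ⊕ ι → (Fin m → ℂ) := Sum.elim l r with hv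
  have pair : ∀ (c : ι ⊕ ι → ℂ) (w : Fin m → ℂ), bf m (∑ i, c i • v i) w
      = ∑ i, c i * bf m (v i) w := by
    intro c w
    rw [bf_sum_left]
    exact Finset.sum_congr rfl fun i _ => bf_smul_left m _ _ _
  have hindep : LinearIndependent ℂ v := by
    rw [Fintype.linearIndependent_iff]
    intro c hc
    have key : ∀ a : ι, c (Sum.inl a) = 0 ∧ c (Sum.inr a) = 0 := by
      intro a
      constructor
      · have := congrArg (fun w => bf m w (r a)) hc
        rw [pair] at this
        rw [Fintype.sum_sum_type] at this
        simp only [hv, Sum.elim_inl, Sum.elim_inr, hlr, hrr, bf_zero_left] at this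
        simpa using this
      · have := congrArg (fun w => bf m w (l a)) hc
        rw [pair] at this
        rw [Fintype.sum_sum_type] at this
        have h1 : ∀ i, bf m (l i) (l a) = 0 := fun i => hll i a
        have h2 : ∀ i, bf m (r i) (l a) = if a = i then 1 else 0 := by
          intro i; rw [bf_symm, hlr]
        simp only [hv, Sum.elim_inl, Sum.elim_inr, h1, h2, bf_zero_left] at this
        simpa using this
    exact fun i => by cases i with
      | inl a => exact (key a).1
      | inr a => exact (key a).2
  have hcard2 : Fintype.card (ι ⊕ ι) = finrank ℂ (Fin m → ℂ) := by
    rw [Fintype.card_sum, hcard, Module.finrank_pi, Fintype.card_fin]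
    omega
  exact ⟨basisOfLinearIndependentOfCardEqFinrank hindep hcard2,
    coe_basisOfLinearIndependentOfCardEqFinrank _ _⟩

/-- repr coordinates via pairing. -/
lemma hyp_repr {l r : ι → (Fin m → ℂ)}
    (hll : ∀ i j, bf m (l i) (l j) = 0)
    (hrr : ∀ i j, bf m (r i) (r j) = 0)
    (hlr : ∀ i j, bf m (l i) (r j) = if i = j then 1 else 0)
    (BV : Basis (ι ⊕ ι) ℂ (Fin m → ℂ)) (hBV : ⇑BV = Sum.elim l r) :
    ∀ x, (∀ j, BV.repr x (Sum.inl j) = bf m x (r j)) ∧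
         (∀ j, BV.repr x (Sum.inr j) = bf m x (l j)) := by
  classical
  have main : ∀ (p : ι ⊕ ι) (w : Fin m → ℂ),
      (∀ i : ι ⊕ ι, bf m (BV i) w = if i = p then 1 else 0) →
      ∀ x, BV.repr x p = bf m x w := by
    intro p w hw x
    have hcoord : (BV.coord p : (Fin m → ℂ) →ₗ[ℂ] ℂ) = (Bf m).flip w := by
      apply Basis.ext BV
      intro i
      simp only [Basis.coord_apply, Basis.repr_self, LinearMap.flip_apply, Bf_apply]
      rw [hw i, Finsupp.single_apply]
    have := congrFun (congrArg (fun (f : (Fin m → ℂ) →ₗ[ℂ] ℂ) => (f : (Fin m → ℂ) → ℂ)) hcoord) x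
    simpa [Basis.coord_apply, LinearMap.flip_apply, Bf_apply] using this
  intro x
  constructor
  · intro j
    apply main (Sum.inl j) (r j) _ x
    intro i
    cases i with
    | inl a => simp [hBV, hlr]
    | inr a => simp [hBV, hrr]
  · intro j
    apply main (Sum.inr j) (l j) _ x
    intro i
    cases i with
    | inl a => simp [hBV, hll]
    | inr a =>
      simp only [hBV, Sum.elim_inr]
      rw [bf_symm, hlr]
      simp [eq_comm]
end hyp

section tools
variable (m : ℕ)

lemma submodule_basis {k : ℕ} (W : Submodule ℂ (Fin m → ℂ)) (h : finrank ℂ W = k) :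
    ∃ p : Fin k → (Fin m → ℂ), LinearIndependent ℂ p ∧
      span ℂ (Set.range p) = W ∧ ∀ i, p i ∈ W := by
  classical
  set bW : Basis (Fin k) ℂ W := (Module.finBasis ℂ W).reindex (finCongr h)
  refine ⟨fun i => (bW i : Fin m → ℂ), ?_, ?_, fun i => (bW i).2⟩
  · exact bW.linearIndependent.map' W.subtype W.ker_subtype
  · have : Set.range (fun i => (bW i : Fin m → ℂ)) = W.subtype '' Set.range bW := by
      ext v; simp [Set.range_comp]
    rw [this, Submodule.span_image, Basis.span_eq, Submodule.map_top, Submodule.range_subtype]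

lemma isom_of_gram {ι : Type} [Fintype ι] [DecidableEq ι]
    (BV BV' : Basis ι ℂ (Fin m → ℂ)) (e : ι ≃ ι)
    (h : ∀ i j, bf m (BV' (e i)) (BV' (e j)) = bf m (BV i) (BV j)) :
    ∀ x y, bf m ((BV.equiv BV' e) x) ((BV.equiv BV' e) y) = bf m x y := by
  set T := (BV.equiv BV' e).toLinearMap with hT
  have : (Bf m).compl₁₂ T T = Bf m := by
    apply LinearMap.ext_basis BV BV
    intro i j
    simp only [LinearMap.compl₁₂_apply, hT, LinearEquiv.coe_coe, Basis.equiv_apply, Bf_apply]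
    exact h i j
  intro x y
  simpa [LinearMap.compl₁₂_apply, Bf_apply, hT] using
    congrArg (fun (f : (Fin m → ℂ) →ₗ[ℂ] (Fin m → ℂ) →ₗ[ℂ] ℂ) => f x y) this

lemma det_basis_perm {ι : Type} [Fintype ι] [DecidableEq ι]
    (BV : Basis ι ℂ (Fin m → ℂ)) (π : Equiv.Perm ι) :
    LinearMap.det (BV.equiv BV π).toLinearMap = ((Equiv.Perm.sign π : ℤ) : ℂ) := by
  rw [← LinearMap.det_toMatrix BV]
  have : LinearMap.toMatrix BV BV (BV.equiv BV π).toLinearMap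
      = Matrix.transpose (Equiv.Perm.permMatrix ℂ π) := by
    ext i j
    rw [LinearMap.toMatrix_apply]
    simp only [LinearEquiv.coe_coe, Basis.equiv_apply, Basis.repr_self,
      Matrix.transpose_apply]
    rw [Finsupp.single_apply, Equiv.Perm.permMatrix]
    simp [PEquiv.toMatrix_apply, Equiv.toPEquiv, Option.mem_def, eq_comm]
  rw [this, Matrix.det_transpose, Matrix.det_permutation]

end tools

open Fin.NatCast in
lemma finRotate_pow_apply (N k : ℕ) (x : Fin (N + 1)) :
    ((finRotate (N + 1)) ^ k) x = x + (k : Fin (N + 1)) := by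
  induction k with
  | zero => simp
  | succ k ih =>
    rw [pow_succ', Equiv.Perm.mul_apply, ih, finRotate_succ_apply]
    rw [Nat.cast_add, Nat.cast_one, add_assoc]

open Fin.NatCast in
lemma sign_sumComm (r : ℕ) :
    Equiv.Perm.sign (Equiv.sumComm (Fin r) (Fin r) : Equiv.Perm (Fin r ⊕ Fin r)) = (-1) ^ r := by
  rcases Nat.eq_zero_or_pos r with hr | hr
  · subst hr
    have : (Equiv.sumComm (Fin 0) (Fin 0) : Equiv.Perm (Fin 0 ⊕ Fin 0)) = 1 :=
      Equiv.ext fun x => by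
        cases x with
        | inl a => exact absurd a.2 (by omega)
        | inr a => exact absurd a.2 (by omega)
    rw [this]; simp
  obtain ⟨N, hN⟩ : ∃ N, r + r = N + 1 := ⟨r + r - 1, by omega⟩
  set e : (Fin r ⊕ Fin r) ≃ Fin (N + 1) := finSumFinEquiv.trans (finCongr hN) with he
  set ρ : Equiv.Perm (Fin (N + 1)) :=
    (e.permCongr (Equiv.sumComm (Fin r) (Fin r))) with hρ
  have h1 : Equiv.Perm.sign ρ = Equiv.Perm.sign
      (Equiv.sumComm (Fin r) (Fin r) : Equiv.Perm (Fin r ⊕ Fin r)) :=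
    Equiv.Perm.sign_permCongr _ _
  have hrval : ((r : Fin (N + 1))).val = r := by
    rw [Fin.val_natCast]; exact Nat.mod_eq_of_lt (by omega)
  have h2 : ρ = (finRotate (N + 1)) ^ r := by
    ext x
    obtain ⟨p, rfl⟩ : ∃ p, e p = x := ⟨e.symm x, by simp⟩
    rw [finRotate_pow_apply]
    have : ρ (e p) = e (Sum.swap p) := by
      simp [hρ, Equiv.permCongr_apply]
    rw [this]
    cases p with
    | inl i =>
      simp only [he, Sum.swap_inl, Equiv.trans_apply, finCongr_apply, Fin.coe_cast,
        finSumFinEquiv_apply_left, finSumFinEquiv_apply_right, Fin.val_add, hrval,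
        Fin.coe_castAdd, Fin.coe_natAdd]
      have hi : (i : ℕ) < r := i.2
      rw [Nat.mod_eq_of_lt (by omega)]
      omega
    | inr i =>
      simp only [he, Sum.swap_inr, Equiv.trans_apply, finCongr_apply, Fin.coe_cast,
        finSumFinEquiv_apply_left, finSumFinEquiv_apply_right, Fin.val_add, hrval,
        Fin.coe_castAdd, Fin.coe_natAdd]
      have hi : (i : ℕ) < r := i.2
      rw [show r + (i:ℕ) + r = (i:ℕ) + (N + 1) by omega, Nat.add_mod_right,
        Nat.mod_eq_of_lt (by omega)]
  rw [← h1, h2, map_pow, sign_finRotate, ← pow_mul]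
  obtain ⟨s, rfl⟩ : ∃ s, r = s + 1 := ⟨r - 1, by omega⟩
  have hN' : N = 2 * s + 1 := by omega
  subst hN'
  rw [show (2 * s + 1 + 1 - 1) * (s + 1) = 2 * (s * s + s) + (s + 1) by rw [Nat.add_sub_cancel]; ring,
    pow_add, pow_mul]
  simp

/-- Part I: any isometry stabilizing a maximal isotropic subspace has determinant 1. -/
lemma stab_det (n : ℕ) (hn : 0 < n) (W' : Submodule ℂ (Fin (2 * n) → ℂ))
    (hW' : ∀ w ∈ W', ∀ w' ∈ W', bf (2 * n) w w' = 0)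
    (hd : finrank ℂ W' = n)
    (S : (Fin (2 * n) → ℂ) ≃ₗ[ℂ] (Fin (2 * n) → ℂ))
    (hisom : ∀ x y, bf (2 * n) (S x) (S y) = bf (2 * n) x y)
    (hmap : W'.map (S : (Fin (2 * n) → ℂ) →ₗ[ℂ] (Fin (2 * n) → ℂ)) = W') :
    LinearMap.det (S : (Fin (2 * n) → ℂ) →ₗ[ℂ] (Fin (2 * n) → ℂ)) = 1 := by
  classical
  obtain ⟨p, hp, hps, hpW⟩ := submodule_basis (2 * n) W' hd
  have hpp : ∀ i j, bf (2 * n) (p i) (p j) = 0 := fun i j => hW' _ (hpW i) _ (hpW j)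
  have hy : ∀ j : Fin n, ∃ v, ∀ i, bf (2 * n) v (p i) = if j = i then 1 else 0 :=
    fun j => exists_dual (2 * n) hp (fun i => if j = i then 1 else 0)
  choose y hy using hy
  obtain ⟨z, hz1, hz2, -⟩ := corr (2 * n) hpp hy
  have hlr : ∀ i j, bf (2 * n) (p i) (z j) = if i = j then 1 else 0 := by
    intro i j; rw [bf_symm, hz1]; simp [eq_comm]
  obtain ⟨BV, hBV⟩ := hyp_basis (2 * n) hn (Fintype.card_fin n) rfl hpp hz2 hlr
  have reprs := hyp_repr (2 * n) hpp hz2 hlr BV hBV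
  have hBVl : ∀ i, BV (Sum.inl i) = p i := fun i => by rw [hBV]; rfl
  have hBVr : ∀ i, BV (Sum.inr i) = z i := fun i => by rw [hBV]; rfl
  set M := LinearMap.toMatrix BV BV (S : (Fin (2 * n) → ℂ) →ₗ[ℂ] (Fin (2 * n) → ℂ)) with hMdef
  have hSin : ∀ v ∈ W', S v ∈ W' := by
    intro v hv
    rw [← hmap]
    exact Submodule.mem_map_of_mem hv
  have hreprSp : ∀ i k, BV.repr (S (p i)) (Sum.inr k) = 0 := by
    intro i k
    rw [(reprs (S (p i))).2 k]
    exact hW' _ (hSin _ (hpW i)) _ (hpW k)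
  have hM21 : M.toBlocks₂₁ = 0 := by
    ext k j
    simp only [Matrix.toBlocks₂₁, Matrix.of_apply, Matrix.zero_apply, hMdef,
      LinearMap.toMatrix_apply, LinearEquiv.coe_coe, hBVl]
    exact hreprSp j k
  have hexp : ∀ i, S (p i) = ∑ k, M.toBlocks₁₁ k i • p k := by
    intro i
    have h0 := BV.sum_repr (S (p i))
    rw [Fintype.sum_sum_type] at h0
    have : ∀ k, BV.repr (S (p i)) (Sum.inr k) • BV (Sum.inr k) = 0 := by
      intro k; rw [hreprSp i k, zero_smul]
    rw [Finset.sum_congr rfl (fun k _ => this k)] at h0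
    simp only [Finset.sum_const_zero, add_zero] at h0
    rw [← h0]
    apply Finset.sum_congr rfl
    intro k _
    simp only [Matrix.toBlocks₁₁, Matrix.of_apply, hMdef, LinearMap.toMatrix_apply,
      LinearEquiv.coe_coe, hBVl]
  have hC : ∀ k j, M.toBlocks₂₂ k j = bf (2 * n) (S (z j)) (p k) := by
    intro k j
    simp only [Matrix.toBlocks₂₂, Matrix.of_apply, hMdef, LinearMap.toMatrix_apply,
      LinearEquiv.coe_coe, hBVr]
    exact (reprs (S (z j))).2 k
  have hAC : (M.toBlocks₁₁)ᵀ * M.toBlocks₂₂ = 1 := by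
    ext i j
    rw [Matrix.mul_apply]
    have : ∀ k, (M.toBlocks₁₁)ᵀ i k * M.toBlocks₂₂ k j
        = M.toBlocks₁₁ k i * bf (2 * n) (S (z j)) (p k) := by
      intro k; rw [Matrix.transpose_apply, hC]
    rw [Finset.sum_congr rfl (fun k _ => this k)]
    have hkey : bf (2 * n) (p i) (z j) = ∑ k, M.toBlocks₁₁ k i * bf (2 * n) (S (z j)) (p k) := by
      rw [← hisom (p i) (z j), hexp i, bf_sum_left]
      apply Finset.sum_congr rfl
      intro k _
      rw [bf_smul_left, bf_symm (2 * n) (p k) (S (z j))]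
    rw [← hkey, hlr, Matrix.one_apply]
  have hdet2 : M.toBlocks₁₁.det * M.toBlocks₂₂.det = 1 := by
    have := congrArg Matrix.det hAC
    rwa [Matrix.det_mul, Matrix.det_transpose, Matrix.det_one] at this
  rw [← LinearMap.det_toMatrix BV, ← hMdef, ← Matrix.fromBlocks_toBlocks M, hM21,
    Matrix.det_fromBlocks_zero₂₁]
  exact hdet2

/-- a maximal isotropic subspace is its own orthogonal complement -/
lemma max_isotropic_perp (n : ℕ) (W : Submodule ℂ (Fin (2 * n) → ℂ))
    (hW : ∀ w ∈ W, ∀ w' ∈ W, bf (2 * n) w w' = 0)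
    (hd : finrank ℂ W = n) {v : Fin (2 * n) → ℂ}
    (hv : ∀ w ∈ W, bf (2 * n) w v = 0) : v ∈ W := by
  set orth := LinearMap.BilinForm.orthogonal (Bf (2 * n)) W with horth
  have hWorth : W ≤ orth := by
    intro w hw
    rw [horth, LinearMap.BilinForm.mem_orthogonal_iff]
    intro u hu
    exact hW u hu w hw
  have hfr : finrank ℂ orth = n := by
    rw [horth, LinearMap.BilinForm.finrank_orthogonal (Bf_nondeg (2 * n)),
      Module.finrank_pi, Fintype.card_fin, hd]
    omega
  have : W = orth := Submodule.eq_of_le_of_finrank_le hWorth (by rw [hfr, hd])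
  rw [this, horth, LinearMap.BilinForm.mem_orthogonal_iff]
  intro u hu
  exact hv u hu

/-- standard hyperbolic Gram pattern -/
def stdG {ι₀ : Type} [DecidableEq ι₀] : (ι₀ ⊕ ι₀) → (ι₀ ⊕ ι₀) → ℂ := fun i j =>
  match i, j with
  | Sum.inl a, Sum.inr b => if a = b then 1 else 0
  | Sum.inr a, Sum.inl b => if a = b then 1 else 0
  | _, _ => 0

/-- Part II: basis adapted to a maximal isotropic subspace and the last standard vector. -/
lemma adapted_basis_e (n : ℕ) (hn : 0 < n) (W : Submodule ℂ (Fin (2 * n) → ℂ))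
    (hW : ∀ w ∈ W, ∀ w' ∈ W, bf (2 * n) w w' = 0) (hd : finrank ℂ W = n) :
    ∃ BV : Basis ((Fin (n - 1) ⊕ Unit) ⊕ (Fin (n - 1) ⊕ Unit)) ℂ (Fin (2 * n) → ℂ),
      (∀ i j, bf (2 * n) (BV i) (BV j) = stdG i j) ∧
      (Pi.single (⟨2 * n - 1, by omega⟩ : Fin (2 * n)) 1
        = BV (Sum.inr (Sum.inr ())) + (1/2 : ℂ) • BV (Sum.inl (Sum.inr ()))) ∧
      span ℂ (Set.range fun q => BV (Sum.inl q)) = W := by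
  classical
  set e : Fin (2 * n) → ℂ := Pi.single (⟨2 * n - 1, by omega⟩ : Fin (2 * n)) 1 with he
  have hee : bf (2 * n) e e = 1 := by
    rw [he, bf_single]
    simp
  -- find w0 ∈ W with bf w0 e = 1
  have hex : ∃ w ∈ W, bf (2 * n) w e ≠ 0 := by
    by_contra h
    push_neg at h
    have : e ∈ W := max_isotropic_perp n W hW hd h
    rw [hW e this e this] at hee
    exact one_ne_zero hee.symm
  obtain ⟨w, hwW, hwe⟩ := hex
  set w0 : Fin (2 * n) → ℂ := (bf (2 * n) w e)⁻¹ • w with hw0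
  have hw0W : w0 ∈ W := W.smul_mem _ hwW
  have hw0e : bf (2 * n) w0 e = 1 := by
    rw [hw0, bf_smul_left, inv_mul_cancel₀ hwe]
  have hw0w0 : bf (2 * n) w0 w0 = 0 := hW _ hw0W _ hw0W
  -- the hyperplane part U of W
  set f : (Fin (2 * n) → ℂ) →ₗ[ℂ] ℂ := (Bf (2 * n)).flip e with hf
  have hfapp : ∀ v, f v = bf (2 * n) v e := fun v => rfl
  set U : Submodule ℂ (Fin (2 * n) → ℂ) := W ⊓ LinearMap.ker f with hU
  have hUW : U ≤ W := inf_le_left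
  have hUker : ∀ v ∈ U, bf (2 * n) v e = 0 := by
    intro v hv
    have h2 : f v = 0 := hv.2
    rwa [hfapp] at h2
  -- finrank U = n - 1
  have hUrank : finrank ℂ U = n - 1 := by
    set g : W →ₗ[ℂ] ℂ := f.comp W.subtype with hg
    have hrange : LinearMap.range g = ⊤ := by
      rw [LinearMap.range_eq_top]
      intro c
      refine ⟨c • ⟨w0, hw0W⟩, ?_⟩
      simp only [hg, LinearMap.comp_apply, map_smul]
      rw [Submodule.coe_subtype, hfapp, hw0e, smul_eq_mul, mul_one]
    have hrn := LinearMap.finrank_range_add_finrank_ker g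
    rw [hrange] at hrn
    have h1 : finrank ℂ (⊤ : Submodule ℂ ℂ) = 1 := by simp
    rw [h1, hd] at hrn
    have hmap : U = (LinearMap.ker g).map W.subtype := by
      ext v
      constructor
      · rintro ⟨hvW, hvk⟩
        exact ⟨⟨v, hvW⟩, by simpa [hg] using hvk, rfl⟩
      · rintro ⟨⟨u, huW⟩, huk, rfl⟩
        exact ⟨huW, by simpa [hg] using huk⟩
    rw [hmap, Submodule.finrank_map_subtype_eq]
    omega
  obtain ⟨u, hu_ind, hu_span, hu_mem⟩ := submodule_basis (2 * n) U hUrank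
  have huW : ∀ i, u i ∈ W := fun i => hUW (hu_mem i)
  have hue : ∀ i, bf (2 * n) (u i) e = 0 := fun i => hUker _ (hu_mem i)
  -- z0
  set z0 : Fin (2 * n) → ℂ := e - (1/2 : ℂ) • w0 with hz0
  have hez : e = z0 + (1/2 : ℂ) • w0 := by rw [hz0]; abel
  have hz0z0 : bf (2 * n) z0 z0 = 0 := by
    simp only [hz0, bf_sub_left, bf_sub_right, bf_smul_left, bf_smul_right]
    rw [bf_symm (2 * n) e w0]
    rw [hee, hw0w0, hw0e]
    ring
  have hw0z0 : bf (2 * n) w0 z0 = 1 := by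
    simp only [hz0, bf_sub_right, bf_smul_right]
    rw [hw0e, hw0w0]
    ring
  have huz0 : ∀ i, bf (2 * n) (u i) z0 = 0 := by
    intro i
    simp only [hz0, bf_sub_right, bf_smul_right]
    rw [hue, hW _ (huW i) _ hw0W]
    ring
  -- independence of (u, w0, z0)
  set x : (Fin (n - 1) ⊕ Unit) ⊕ Unit → (Fin (2 * n) → ℂ) :=
    Sum.elim (Sum.elim u (fun _ => w0)) (fun _ => z0) with hx
  have hz0w0 : bf (2 * n) z0 w0 = 1 := by rw [bf_symm]; exact hw0z0
  have hx_ind : LinearIndependent ℂ x := by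
    rw [Fintype.linearIndependent_iff]
    intro c hc
    have pair : ∀ v, ∑ i, c i * bf (2 * n) (x i) v = 0 := by
      intro v
      have hstep : bf (2 * n) (∑ i, c i • x i) v = ∑ i, c i * bf (2 * n) (x i) v := by
        rw [bf_sum_left]
        exact Finset.sum_congr rfl fun i _ => bf_smul_left _ _ _ _
      rw [← hstep, hc, bf_zero_left]
    have hA : c (Sum.inr ()) = 0 := by
      have h0 := pair w0
      rw [Fintype.sum_sum_type, Fintype.sum_sum_type] at h0
      simp only [hx, Sum.elim_inl, Sum.elim_inr] at h0
      have e1 : ∀ i, bf (2 * n) (u i) w0 = 0 := fun i => hW _ (huW i) _ hw0W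
      simp only [e1, hw0w0, hz0w0, mul_zero, mul_one, Finset.sum_const_zero] at h0
      simpa using h0
    have hB : c (Sum.inl (Sum.inr ())) = 0 := by
      have h0 := pair z0
      rw [Fintype.sum_sum_type, Fintype.sum_sum_type] at h0
      simp only [hx, Sum.elim_inl, Sum.elim_inr] at h0
      simp only [huz0, hw0z0, hz0z0, mul_zero, mul_one, Finset.sum_const_zero] at h0
      simpa using h0
    have hC : ∀ i : Fin (n - 1), c (Sum.inl (Sum.inl i)) = 0 := by
      have h0 : ∑ i : Fin (n - 1), c (Sum.inl (Sum.inl i)) • u i = 0 := by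
        have h1 := hc
        rw [Fintype.sum_sum_type, Fintype.sum_sum_type] at h1
        simp only [hx, Sum.elim_inl, Sum.elim_inr] at h1
        simp only [Finset.univ_unique, Finset.sum_singleton] at h1
        simp only [show (default : Unit) = () from rfl, hA, hB, zero_smul, add_zero] at h1
        exact h1
      exact Fintype.linearIndependent_iff.mp hu_ind _ h0
    intro q
    rcases q with (i | ⟨⟩) | ⟨⟩
    · exact hC i
    · exact hB
    · exact hA
  -- dual family
  have hyy : ∀ j : Fin (n - 1), ∃ v, ∀ q, bf (2 * n) v (x q) =
      (fun q => match q with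
        | Sum.inl (Sum.inl i) => if j = i then (1:ℂ) else 0
        | _ => 0) q :=
    fun j => exists_dual (2 * n) hx_ind _
  choose y hy using hyy
  have hyu : ∀ j i, bf (2 * n) (y j) (u i) = if j = i then 1 else 0 :=
    fun j i => hy j (Sum.inl (Sum.inl i))
  have hyw0 : ∀ j, bf (2 * n) (y j) w0 = 0 := fun j => hy j (Sum.inl (Sum.inr ()))
  have hyz0 : ∀ j, bf (2 * n) (y j) z0 = 0 := fun j => hy j (Sum.inr ())
  have huu : ∀ i j, bf (2 * n) (u i) (u j) = 0 := fun i j => hW _ (huW i) _ (huW j)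
  obtain ⟨z, hz1, hz2, hz3⟩ := corr (2 * n) huu hyu
  have hzw0 : ∀ j, bf (2 * n) (z j) w0 = 0 :=
    fun j => hz3 j w0 (fun i => hW _ (huW i) _ hw0W) (hyw0 j)
  have hzz0 : ∀ j, bf (2 * n) (z j) z0 = 0 := fun j => hz3 j z0 huz0 (hyz0 j)
  -- assemble hyperbolic basis
  set l : (Fin (n - 1) ⊕ Unit) → (Fin (2 * n) → ℂ) := Sum.elim u (fun _ => w0) with hl
  set rf : (Fin (n - 1) ⊕ Unit) → (Fin (2 * n) → ℂ) := Sum.elim z (fun _ => z0) with hrf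
  have hmeml : ∀ q, l q ∈ W := by
    intro q; rcases q with i | ⟨⟩
    · exact huW i
    · exact hw0W
  have hll : ∀ i j, bf (2 * n) (l i) (l j) = 0 := fun i j => hW _ (hmeml i) _ (hmeml j)
  have hrr : ∀ i j, bf (2 * n) (rf i) (rf j) = 0 := by
    intro i j
    rcases i with i | ⟨⟩ <;> rcases j with j | ⟨⟩
    · exact hz2 i j
    · exact hzz0 i
    · rw [bf_symm]; exact hzz0 j
    · exact hz0z0
  have hlr : ∀ i j, bf (2 * n) (l i) (rf j) = if i = j then 1 else 0 := by
    intro i j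
    rcases i with i | ⟨⟩ <;> rcases j with j | ⟨⟩
    · rw [bf_symm]
      simp only [hl, hrf, Sum.elim_inl]
      rw [hz1]
      simp [eq_comm]
    · simp only [hl, hrf, Sum.elim_inl, Sum.elim_inr]
      rw [huz0]
      simp
    · simp only [hl, hrf, Sum.elim_inl, Sum.elim_inr]
      rw [bf_symm, hzw0]
      simp
    · simp only [hl, hrf, Sum.elim_inr]
      rw [hw0z0]
      simp
  have hcard : Fintype.card (Fin (n - 1) ⊕ Unit) = n := by
    simp; omega
  obtain ⟨BV, hBV⟩ := hyp_basis (2 * n) hn hcard rfl hll hrr hlr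
  refine ⟨BV, ?_, ?_, ?_⟩
  · intro i j
    rcases i with i | i <;> rcases j with j | j <;>
      simp only [hBV, Sum.elim_inl, Sum.elim_inr, stdG]
    · exact hll i j
    · exact hlr i j
    · rw [bf_symm, hlr]
      simp [eq_comm]
    · exact hrr i j
  · have h1 : BV (Sum.inr (Sum.inr ())) = z0 := by rw [hBV]; rfl
    have h2 : BV (Sum.inl (Sum.inr ())) = w0 := by rw [hBV]; rfl
    rw [h1, h2]
    show e = _
    exact hez
  · have hfun : (fun q => BV (Sum.inl q)) = l := by
      funext q; rw [hBV]; rfl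
    rw [hfun]
    apply le_antisymm
    · rw [span_le]
      rintro v ⟨q, rfl⟩
      exact hmeml q
    · intro v hv
      have hsub : v - (bf (2 * n) v e) • w0 ∈ U := by
        refine ⟨W.sub_mem hv (W.smul_mem _ hw0W), ?_⟩
        show f (v - (bf (2 * n) v e) • w0) = 0
        rw [map_sub, map_smul, hfapp, hfapp, hw0e]
        simp
      have hUle : U ≤ span ℂ (Set.range l) := by
        rw [← hu_span, span_le]
        rintro _ ⟨i, rfl⟩
        exact subset_span ⟨Sum.inl i, rfl⟩
      have hw0mem : w0 ∈ span ℂ (Set.range l) := subset_span ⟨Sum.inr (), rfl⟩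
      have := add_mem (hUle hsub) (Submodule.smul_mem _ (bf (2 * n) v e) hw0mem)
      simpa using this

set_option synthInstance.maxHeartbeats 1000000 in
set_option maxHeartbeats 1600000 in
/-- Part III: existence of an isometry carrying W to W' with determinant (-1)^(n-k). -/
lemma exists_isom_det (n : ℕ) (hn : 0 < n) (W W' : Submodule ℂ (Fin (2 * n) → ℂ))
    (hW : ∀ w ∈ W, ∀ w' ∈ W, bf (2 * n) w w' = 0)
    (hW' : ∀ w ∈ W', ∀ w' ∈ W', bf (2 * n) w w' = 0)
    (hdW : finrank ℂ W = n) (hdW' : finrank ℂ W' = n) :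
    ∃ T : (Fin (2 * n) → ℂ) ≃ₗ[ℂ] (Fin (2 * n) → ℂ),
      (∀ x y, bf (2 * n) (T x) (T y) = bf (2 * n) x y) ∧
      W.map (T : (Fin (2 * n) → ℂ) →ₗ[ℂ] (Fin (2 * n) → ℂ)) = W' ∧
      LinearMap.det (T : (Fin (2 * n) → ℂ) →ₗ[ℂ] (Fin (2 * n) → ℂ))
        = (-1 : ℂ) ^ (n - finrank ℂ (W ⊓ W' : Submodule ℂ (Fin (2 * n) → ℂ))) := by
  classical
  set K : Submodule ℂ (Fin (2 * n) → ℂ) := W ⊓ W' with hKdef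
  set k : ℕ := finrank ℂ K with hk
  have hKW : K ≤ W := inf_le_left
  have hKW' : K ≤ W' := inf_le_right
  have hkn : k ≤ n :=
    le_trans (le_of_eq hk) (le_trans (Submodule.finrank_mono hKW) (le_of_eq hdW))
  set r : ℕ := n - k with hr
  -- complement of K in W
  set K₀ : Submodule ℂ W := K.comap W.subtype with hK₀
  obtain ⟨C₀, hC₀⟩ := Submodule.exists_isCompl K₀
  set C : Submodule ℂ (Fin (2 * n) → ℂ) := C₀.map W.subtype with hC
  have hCW : C ≤ W := Submodule.map_subtype_le W C₀
  have hK₀rank : finrank ℂ K₀ = k := (Submodule.comapSubtypeEquivOfLe hKW).finrank_eq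
  have hC₀rank : finrank ℂ C₀ = r := by
    have := Submodule.finrank_add_eq_of_isCompl hC₀
    rw [hK₀rank] at this
    have h2 : finrank ℂ W = n := hdW
    omega
  have hCrank : finrank ℂ C = r := by
    rw [hC, Submodule.finrank_map_subtype_eq]
    exact hC₀rank
  have hKCsup : K ⊔ C = W := by
    have h1 : K₀ ⊔ C₀ = ⊤ := hC₀.sup_eq_top
    have h2 := congrArg (Submodule.map W.subtype) h1
    rw [Submodule.map_sup, Submodule.map_comap_subtype, Submodule.map_subtype_top] at h2
    rw [inf_eq_right.mpr hKW] at h2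
    exact h2
  have hKCdisj : K ⊓ C = ⊥ := by
    have h1 : K₀ ⊓ C₀ = ⊥ := hC₀.inf_eq_bot
    have h2 := congrArg (Submodule.map W.subtype) h1
    rw [Submodule.map_inf _ (Submodule.injective_subtype W), Submodule.map_comap_subtype,
      Submodule.map_bot, inf_eq_right.mpr hKW] at h2
    exact h2
  obtain ⟨a, ha_ind, ha_span, ha_mem⟩ := submodule_basis (2 * n) K hk.symm
  obtain ⟨c, hc_ind, hc_span, hc_mem⟩ := submodule_basis (2 * n) C hCrank
  have haW : ∀ i, a i ∈ W := fun i => hKW (ha_mem i)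
  have haW' : ∀ i, a i ∈ W' := fun i => hKW' (ha_mem i)
  have hcW : ∀ i, c i ∈ W := fun i => hCW (hc_mem i)
  have hind_ac : LinearIndependent ℂ (Sum.elim a c) := by
    apply LinearIndependent.sum_type ha_ind hc_ind
    rw [ha_span, hc_span]
    exact disjoint_iff.mpr hKCdisj
  -- dual family d in W'
  set φ : W' →ₗ[ℂ] (Fin r → ℂ) :=
    { toFun := fun v i => bf (2 * n) (c i) (v : Fin (2 * n) → ℂ)
      map_add' := by intro v w; funext i; simp [bf_add_right]
      map_smul' := by intro t v; funext i; simp [bf_smul_right] } with hφ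
  have hφapp : ∀ (v : W') (i : Fin r), φ v i = bf (2 * n) (c i) (v : Fin (2 * n) → ℂ) :=
    fun v i => rfl
  have hkerφ : LinearMap.ker φ = K.comap W'.subtype := by
    ext v
    constructor
    · intro hv
      have hv0 : ∀ i, bf (2 * n) (c i) (v : Fin (2 * n) → ℂ) = 0 := by
        intro i
        have := congrFun (LinearMap.mem_ker.mp hv) i
        rwa [hφapp] at this
      have hvW : (v : Fin (2 * n) → ℂ) ∈ W := by
        apply max_isotropic_perp n W hW hdW
        intro w hw
        rw [← hKCsup] at hw
        obtain ⟨p, hp, q, hq, rfl⟩ := Submodule.mem_sup.mp hw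
        rw [bf_add_left]
        have hqv : bf (2 * n) q (v : Fin (2 * n) → ℂ) = 0 := by
          rw [← hc_span] at hq
          refine span_induction ?_ ?_ ?_ ?_ hq
          · rintro _ ⟨i, rfl⟩; exact hv0 i
          · exact bf_zero_left _ _
          · intro s t _ _ hs ht; rw [bf_add_left, hs, ht, add_zero]
          · intro t s _ hs; rw [bf_smul_left, hs, mul_zero]
        rw [hqv, hW' p (hKW' hp) _ v.2, add_zero]
      exact ⟨hvW, v.2⟩
    · intro hv
      rw [LinearMap.mem_ker]
      funext i
      rw [hφapp]
      exact hW _ (hcW i) _ (hKW hv)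
  have hkerrank : finrank ℂ (LinearMap.ker φ) = k := by
    rw [hkerφ]
    exact (Submodule.comapSubtypeEquivOfLe hKW').finrank_eq
  have hφsurj : ∀ t : Fin r → ℂ, ∃ v : W', φ v = t := by
    have hrange : LinearMap.range φ = ⊤ := by
      apply Submodule.eq_top_of_finrank_eq
      have := LinearMap.finrank_range_add_finrank_ker φ
      rw [hkerrank, hdW'] at this
      rw [Module.finrank_pi, Fintype.card_fin]
      omega
    intro t
    exact LinearMap.range_eq_top.mp hrange t
  choose dd hdd using fun j => hφsurj (Pi.single j 1)
  set d : Fin r → (Fin (2 * n) → ℂ) := fun j => (dd j : Fin (2 * n) → ℂ) with hd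
  have hdW'mem : ∀ j, d j ∈ W' := fun j => (dd j).2
  have hcd : ∀ i j, bf (2 * n) (c i) (d j) = if i = j then 1 else 0 := by
    intro i j
    have := congrFun (hdd j) i
    rw [hφapp] at this
    rw [hd, this, Pi.single_apply]
  have had : ∀ i j, bf (2 * n) (a i) (d j) = 0 := fun i j => hW' _ (haW' i) _ (hdW'mem j)
  -- joint independence of (a, c, d)
  set x : (Fin k ⊕ Fin r) ⊕ Fin r → (Fin (2 * n) → ℂ) := Sum.elim (Sum.elim a c) d with hx
  have hx_ind : LinearIndependent ℂ x := by
    rw [Fintype.linearIndependent_iff]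
    intro γ hγ
    have pair : ∀ v, ∑ i, γ i * bf (2 * n) (x i) v = 0 := by
      intro v
      have hstep : bf (2 * n) (∑ i, γ i • x i) v = ∑ i, γ i * bf (2 * n) (x i) v := by
        rw [bf_sum_left]
        exact Finset.sum_congr rfl fun i _ => bf_smul_left _ _ _ _
      rw [← hstep, hγ, bf_zero_left]
    have hdzero : ∀ i : Fin r, γ (Sum.inr i) = 0 := by
      intro i
      have h0 := pair (c i)
      rw [Fintype.sum_sum_type, Fintype.sum_sum_type] at h0
      have e1 : ∀ j, bf (2 * n) (a j) (c i) = 0 := fun j => hW _ (haW j) _ (hcW i)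
      have e2 : ∀ j, bf (2 * n) (c j) (c i) = 0 := fun j => hW _ (hcW j) _ (hcW i)
      have e3 : ∀ j, bf (2 * n) (d j) (c i) = if i = j then 1 else 0 := by
        intro j; rw [bf_symm]; exact hcd i j
      simp only [hx, Sum.elim_inl, Sum.elim_inr, e1, e2, e3, mul_zero,
        Finset.sum_const_zero, zero_add, mul_ite, mul_one] at h0
      simpa using h0
    have hrest : ∀ q : Fin k ⊕ Fin r, γ (Sum.inl q) = 0 := by
      have h0 : ∑ q : Fin k ⊕ Fin r, γ (Sum.inl q) • (Sum.elim a c) q = 0 := by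
        have h1 := hγ
        rw [Fintype.sum_sum_type] at h1
        have h2 : ∀ j : Fin r, γ (Sum.inr j) • x (Sum.inr j) = 0 := by
          intro j; rw [hdzero j, zero_smul]
        rw [Finset.sum_congr rfl (fun j _ => h2 j)] at h1
        simp only [Finset.sum_const_zero, add_zero] at h1
        exact h1
      exact Fintype.linearIndependent_iff.mp hind_ac _ h0
    intro q
    rcases q with q | i
    · exact hrest q
    · exact hdzero i
  -- dual family b2 for a
  have hyy : ∀ j : Fin k, ∃ v, ∀ q, bf (2 * n) v (x q) =
      (fun q => match q with
        | Sum.inl (Sum.inl i) => if j = i then (1:ℂ) else 0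
        | _ => 0) q :=
    fun j => exists_dual (2 * n) hx_ind _
  choose y hy using hyy
  have hya : ∀ j i, bf (2 * n) (y j) (a i) = if j = i then 1 else 0 :=
    fun j i => hy j (Sum.inl (Sum.inl i))
  have hyc : ∀ j i, bf (2 * n) (y j) (c i) = 0 := fun j i => hy j (Sum.inl (Sum.inr i))
  have hyd : ∀ j i, bf (2 * n) (y j) (d i) = 0 := fun j i => hy j (Sum.inr i)
  have haa : ∀ i j, bf (2 * n) (a i) (a j) = 0 := fun i j => hW _ (haW i) _ (haW j)
  obtain ⟨b2, hb1, hb2, hb3⟩ := corr (2 * n) haa hya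
  have hb2c : ∀ j i, bf (2 * n) (b2 j) (c i) = 0 :=
    fun j i => hb3 j (c i) (fun i' => hW _ (haW i') _ (hcW i)) (hyc j i)
  have hb2d : ∀ j i, bf (2 * n) (b2 j) (d i) = 0 :=
    fun j i => hb3 j (d i) (fun i' => had i' i) (hyd j i)
  -- hyperbolic basis
  set l : (Fin k ⊕ Fin r) → (Fin (2 * n) → ℂ) := Sum.elim a c with hl
  set rfm : (Fin k ⊕ Fin r) → (Fin (2 * n) → ℂ) := Sum.elim b2 d with hrfm
  have hmeml : ∀ q, l q ∈ W := by
    intro q; rcases q with i | i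
    · exact haW i
    · exact hcW i
  have hll : ∀ i j, bf (2 * n) (l i) (l j) = 0 := fun i j => hW _ (hmeml i) _ (hmeml j)
  have hrr : ∀ i j, bf (2 * n) (rfm i) (rfm j) = 0 := by
    intro i j
    rcases i with i | i <;> rcases j with j | j
    · exact hb2 i j
    · exact hb2d i j
    · rw [bf_symm]; exact hb2d j i
    · exact hW' _ (hdW'mem i) _ (hdW'mem j)
  have hlr : ∀ i j, bf (2 * n) (l i) (rfm j) = if i = j then 1 else 0 := by
    intro i j
    rcases i with i | i <;> rcases j with j | j
    · rw [bf_symm]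
      simp only [hl, hrfm, Sum.elim_inl]
      rw [hb1]
      simp [eq_comm]
    · simp only [hl, hrfm, Sum.elim_inl, Sum.elim_inr]
      rw [had]
      simp
    · simp only [hl, hrfm, Sum.elim_inl, Sum.elim_inr]
      rw [bf_symm, hb2c]
      simp
    · simp only [hl, hrfm, Sum.elim_inr]
      rw [hcd]
      simp
  have hcard : Fintype.card (Fin k ⊕ Fin r) = n := by
    simp only [Fintype.card_sum, Fintype.card_fin]
    omega
  obtain ⟨BV, hBV⟩ := hyp_basis (2 * n) hn hcard rfl hll hrr hlr
  -- the permutation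
  set π : Equiv.Perm ((Fin k ⊕ Fin r) ⊕ (Fin k ⊕ Fin r)) :=
    { toFun := fun q => match q with
        | Sum.inl (Sum.inl i) => Sum.inl (Sum.inl i)
        | Sum.inl (Sum.inr i) => Sum.inr (Sum.inr i)
        | Sum.inr (Sum.inl i) => Sum.inr (Sum.inl i)
        | Sum.inr (Sum.inr i) => Sum.inl (Sum.inr i)
      invFun := fun q => match q with
        | Sum.inl (Sum.inl i) => Sum.inl (Sum.inl i)
        | Sum.inl (Sum.inr i) => Sum.inr (Sum.inr i)
        | Sum.inr (Sum.inl i) => Sum.inr (Sum.inl i)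
        | Sum.inr (Sum.inr i) => Sum.inl (Sum.inr i)
      left_inv := by rintro ((i | i) | (i | i)) <;> rfl
      right_inv := by rintro ((i | i) | (i | i)) <;> rfl } with hπdef
  have hπ1 : ∀ i, π (Sum.inl (Sum.inl i)) = Sum.inl (Sum.inl i) := fun _ => rfl
  have hπ2 : ∀ i, π (Sum.inl (Sum.inr i)) = Sum.inr (Sum.inr i) := fun _ => rfl
  have hπ3 : ∀ i, π (Sum.inr (Sum.inl i)) = Sum.inr (Sum.inl i) := fun _ => rfl
  have hπ4 : ∀ i, π (Sum.inr (Sum.inr i)) = Sum.inl (Sum.inr i) := fun _ => rfl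
  have hsign : Equiv.Perm.sign π = (-1) ^ r := by
    have hconj : π = (Equiv.permCongr
        (Equiv.sumSumSumComm (Fin k) (Fin r) (Fin k) (Fin r)).symm)
        (Equiv.sumCongr (Equiv.refl (Fin k ⊕ Fin k)) (Equiv.sumComm (Fin r) (Fin r))) := by
      ext q
      rcases q with (i | i) | (i | i) <;> rfl
    rw [hconj, Equiv.Perm.sign_permCongr, Equiv.Perm.sign_sumCongr, sign_sumComm]
    simp
  set T := BV.equiv BV π with hT
  have hTBV : ∀ q, T (BV q) = BV (π q) := fun q => BV.equiv_apply q BV π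
  -- Gram of BV
  have hGram : ∀ i j, bf (2 * n) (BV i) (BV j) = stdG i j := by
    intro i j
    rcases i with i | i <;> rcases j with j | j <;>
      simp only [hBV, Sum.elim_inl, Sum.elim_inr, stdG]
    · exact hll i j
    · exact hlr i j
    · rw [bf_symm, hlr]
      simp [eq_comm]
    · exact hrr i j
  -- isometry
  have hisom : ∀ x' y', bf (2 * n) (T x') (T y') = bf (2 * n) x' y' := by
    apply isom_of_gram
    intro i j
    rw [hGram, hGram]
    rcases i with (i | i) | (i | i) <;> rcases j with (j | j) | (j | j) <;>
      simp [hπ1, hπ2, hπ3, hπ4, stdG]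
  -- mapping property
  have hT_a : ∀ i, T (a i) = a i := by
    intro i
    have h1 : a i = BV (Sum.inl (Sum.inl i)) := by rw [hBV]; rfl
    rw [h1, hTBV, hπ1]
  have hT_c : ∀ i, T (c i) = d i := by
    intro i
    have h1 : c i = BV (Sum.inl (Sum.inr i)) := by rw [hBV]; rfl
    have h2 : d i = BV (Sum.inr (Sum.inr i)) := by rw [hBV]; rfl
    rw [h1, hTBV, hπ2, ← h2]
  have hspanW : span ℂ (Set.range a ∪ Set.range c) = W := by
    rw [span_union, ha_span, hc_span, hKCsup]
  have hspanW' : span ℂ (Set.range a ∪ Set.range d) = W' := by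
    apply Submodule.eq_of_le_of_finrank_le
    · rw [span_le, Set.union_subset_iff]
      constructor
      · rintro _ ⟨i, rfl⟩; exact haW' i
      · rintro _ ⟨i, rfl⟩; exact hdW'mem i
    · set emb : (Fin k ⊕ Fin r) → ((Fin k ⊕ Fin r) ⊕ (Fin k ⊕ Fin r)) := fun q =>
        match q with
        | Sum.inl i => Sum.inl (Sum.inl i)
        | Sum.inr j => Sum.inr (Sum.inr j) with hemb
      have hembinj : Function.Injective emb := by
        rintro (i | i) (j | j) h <;> simp [hemb] at h <;> simp [h]
      have had_eq : Sum.elim a d = BV ∘ emb := by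
        funext q
        rcases q with i | i <;> simp [hemb, hBV] <;> rfl
      have had_ind : LinearIndependent ℂ (Sum.elim a d) := by
        rw [had_eq]
        exact BV.linearIndependent.comp emb hembinj
      have : Set.range (Sum.elim a d) = Set.range a ∪ Set.range d := Set.Sum.elim_range a d
      rw [hdW', ← this, finrank_span_eq_card had_ind]
      simp only [Fintype.card_sum, Fintype.card_fin]
      omega
  have hmap : W.map (T : (Fin (2 * n) → ℂ) →ₗ[ℂ] (Fin (2 * n) → ℂ)) = W' := by
    rw [← hspanW, Submodule.map_span, Set.image_union]
    have h1 : (T : (Fin (2 * n) → ℂ) →ₗ[ℂ] (Fin (2 * n) → ℂ)) '' Set.range a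
        = Set.range a := by
      rw [← Set.range_comp]
      have : ((T : (Fin (2 * n) → ℂ) →ₗ[ℂ] (Fin (2 * n) → ℂ)) ∘ a) = a := by
        funext i; exact hT_a i
      rw [this]
    have h2 : (T : (Fin (2 * n) → ℂ) →ₗ[ℂ] (Fin (2 * n) → ℂ)) '' Set.range c
        = Set.range d := by
      rw [← Set.range_comp]
      have : ((T : (Fin (2 * n) → ℂ) →ₗ[ℂ] (Fin (2 * n) → ℂ)) ∘ c) = d := by
        funext i; exact hT_c i
      rw [this]
    rw [h1, h2, hspanW']
  refine ⟨T, hisom, hmap, ?_⟩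
  rw [hT, det_basis_perm, hsign]
  push_cast
  simp


/-- A subspace is `b`-isotropic if `b` vanishes identically on it. -/
def IsIsotropic (m : ℕ) (W : Submodule ℂ (Fin m → ℂ)) : Prop :=
  ∀ w ∈ W, ∀ w' ∈ W, bf m w w' = 0

/-- The complex orthogonal group `SO_{2n}(ℂ)` acts transitively on the set of
`b`-isotropic `n`-dimensional subspaces of `ℂ^{2n}` lying in a fixed connected component of
the orthogonal Grassmannian (two maximal isotropic subspaces `W, W'` lie in the same
component iff `n - dim(W ∩ W')` is even); moreover the subgroup `SO_{2n-1}(ℂ)` fixing the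
vector `e_{2n}` already acts transitively on this set. -/
theorem stmt10 (n : ℕ) (hn : 0 < n) (W W' : Submodule ℂ (Fin (2 * n) → ℂ))
    (hW : IsIsotropic (2 * n) W) (hW' : IsIsotropic (2 * n) W')
    (hdW : Module.finrank ℂ W = n) (hdW' : Module.finrank ℂ W' = n)
    (hcomp : Even (n - Module.finrank ℂ (W ⊓ W' : Submodule ℂ (Fin (2 * n) → ℂ)))) :
    (∃ T : (Fin (2 * n) → ℂ) ≃ₗ[ℂ] (Fin (2 * n) → ℂ),
      (∀ z w, bf (2 * n) (T z) (T w) = bf (2 * n) z w) ∧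
      LinearMap.det (T : (Fin (2 * n) → ℂ) →ₗ[ℂ] (Fin (2 * n) → ℂ)) = 1 ∧
      W.map (T : (Fin (2 * n) → ℂ) →ₗ[ℂ] (Fin (2 * n) → ℂ)) = W') ∧
    (∃ T : (Fin (2 * n) → ℂ) ≃ₗ[ℂ] (Fin (2 * n) → ℂ),
      (∀ z w, bf (2 * n) (T z) (T w) = bf (2 * n) z w) ∧
      LinearMap.det (T : (Fin (2 * n) → ℂ) →ₗ[ℂ] (Fin (2 * n) → ℂ)) = 1 ∧
      T (Pi.single (⟨2 * n - 1, by omega⟩ : Fin (2 * n)) 1) =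
        Pi.single (⟨2 * n - 1, by omega⟩ : Fin (2 * n)) 1 ∧
      W.map (T : (Fin (2 * n) → ℂ) →ₗ[ℂ] (Fin (2 * n) → ℂ)) = W') := by
  classical
  obtain ⟨T₃, hisom₃, hmap₃, hdet₃⟩ := exists_isom_det n hn W W' hW hW' hdW hdW'
  have hdet₃1 : LinearMap.det (T₃ : (Fin (2 * n) → ℂ) →ₗ[ℂ] (Fin (2 * n) → ℂ)) = 1 := by
    rw [hdet₃]
    exact Even.neg_one_pow hcomp
  obtain ⟨BVW, hG_W, heW, hspW⟩ := adapted_basis_e n hn W hW hdW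
  obtain ⟨BVW', hG_W', heW', hspW'⟩ := adapted_basis_e n hn W' hW' hdW'
  set T₂ := BVW.equiv BVW' (Equiv.refl _) with hT₂
  have hisom₂ : ∀ x y, bf (2 * n) (T₂ x) (T₂ y) = bf (2 * n) x y := by
    apply isom_of_gram
    intro i j
    rw [Equiv.refl_apply, Equiv.refl_apply, hG_W', hG_W]
  have hT₂BV : ∀ q, T₂ (BVW q) = BVW' q := fun q => by
    rw [hT₂, Basis.equiv_apply, Equiv.refl_apply]
  have hT₂e : T₂ (Pi.single (⟨2 * n - 1, by omega⟩ : Fin (2 * n)) 1) =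
      Pi.single (⟨2 * n - 1, by omega⟩ : Fin (2 * n)) 1 := by
    rw [heW, map_add, map_smul, hT₂BV, hT₂BV, ← heW']
    exact heW
  have hmap₂ : W.map (T₂ : (Fin (2 * n) → ℂ) →ₗ[ℂ] (Fin (2 * n) → ℂ)) = W' := by
    rw [← hspW, ← hspW', Submodule.map_span, ← Set.range_comp]
    have hfun : ((T₂ : (Fin (2 * n) → ℂ) →ₗ[ℂ] (Fin (2 * n) → ℂ)) ∘ fun q => BVW (Sum.inl q))
        = (fun q => BVW' (Sum.inl q)) := by
      funext q
      exact hT₂BV (Sum.inl q)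
    rw [hfun]
  have hdet₂ : LinearMap.det (T₂ : (Fin (2 * n) → ℂ) →ₗ[ℂ] (Fin (2 * n) → ℂ)) = 1 := by
    set S := T₃.symm.trans T₂ with hS
    have hSisom : ∀ x y, bf (2 * n) (S x) (S y) = bf (2 * n) x y := by
      intro x y
      have h1 : bf (2 * n) (T₃ (T₃.symm x)) (T₃ (T₃.symm y))
          = bf (2 * n) (T₃.symm x) (T₃.symm y) := hisom₃ _ _
      rw [LinearEquiv.apply_symm_apply, LinearEquiv.apply_symm_apply] at h1
      calc bf (2 * n) (S x) (S y) = bf (2 * n) (T₂ (T₃.symm x)) (T₂ (T₃.symm y)) := rfl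
        _ = bf (2 * n) (T₃.symm x) (T₃.symm y) := hisom₂ _ _
        _ = bf (2 * n) x y := h1.symm
    have hSmap : W'.map (S : (Fin (2 * n) → ℂ) →ₗ[ℂ] (Fin (2 * n) → ℂ)) = W' := by
      have h1 : W'.map (T₃.symm : (Fin (2 * n) → ℂ) →ₗ[ℂ] (Fin (2 * n) → ℂ)) = W := by
        rw [← hmap₃]
        ext v
        constructor
        · rintro ⟨w, ⟨u, hu, rfl⟩, rfl⟩
          simpa using hu
        · intro hv
          exact ⟨T₃ v, Submodule.mem_map_of_mem hv, by simp⟩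
      have h2 : W'.map (S : (Fin (2 * n) → ℂ) →ₗ[ℂ] (Fin (2 * n) → ℂ))
          = (W'.map (T₃.symm : (Fin (2 * n) → ℂ) →ₗ[ℂ] (Fin (2 * n) → ℂ))).map
            (T₂ : (Fin (2 * n) → ℂ) →ₗ[ℂ] (Fin (2 * n) → ℂ)) := by
        rw [← Submodule.map_comp]
        rfl
      rw [h2, h1, hmap₂]
    have hSdet := stab_det n hn W' hW' hdW' S hSisom hSmap
    have hd3s : LinearMap.det (T₃.symm : (Fin (2 * n) → ℂ) →ₗ[ℂ] (Fin (2 * n) → ℂ)) = 1 := by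
      have hcomp' : (T₃.symm : (Fin (2 * n) → ℂ) →ₗ[ℂ] (Fin (2 * n) → ℂ)) ∘ₗ
          (T₃ : (Fin (2 * n) → ℂ) →ₗ[ℂ] (Fin (2 * n) → ℂ)) = LinearMap.id := by
        ext v; simp
      have := congrArg LinearMap.det hcomp'
      rwa [LinearMap.det_comp, hdet₃1, mul_one, LinearMap.det_id] at this
    have hScomp : (S : (Fin (2 * n) → ℂ) →ₗ[ℂ] (Fin (2 * n) → ℂ))
        = (T₂ : (Fin (2 * n) → ℂ) →ₗ[ℂ] (Fin (2 * n) → ℂ)) ∘ₗ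
          (T₃.symm : (Fin (2 * n) → ℂ) →ₗ[ℂ] (Fin (2 * n) → ℂ)) := by
      ext v; rfl
    rw [hScomp] at hSdet
    rw [LinearMap.det_comp, hd3s, mul_one] at hSdet
    exact hSdet
  exact ⟨⟨T₂, hisom₂, hdet₂, hmap₂⟩, ⟨T₂, hisom₂, hdet₂, hT₂e, hmap₂⟩⟩
end

section
/- For a generic b-isotropic n-plane \hat{W} in \mathbb{C}^{2n}: if W = \hat{W} \cap V is h-nondegenerate for a nondegenerate Hermitian form h of signature (p,q) on V = \mathbb{C}^{2n-1} (p+q = 2n-1, p even), then the restriction of h to W has signature (p/2, (q-1)/2). -/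
open scoped ComplexConjugate

/-- The Hermitian form `h(z,w) = zᵗ E_{p,q} w̄` of signature `(p, m-p)` on `ℂ^m`. -/
noncomputable def hf (m p : ℕ) (z w : Fin m → ℂ) : ℂ :=
  ∑ j, z j * (if (j : ℕ) < p then 1 else -1) * conj (w j)

variable {m p : ℕ}

lemma hf_conj (z w : Fin m → ℂ) : conj (hf m p z w) = hf m p w z := by
  unfold hf
  rw [map_sum]
  refine Finset.sum_congr rfl fun j _ => ?_
  split_ifs <;> simp <;> ring

noncomputable def hphi (m p : ℕ) (w : Fin m → ℂ) : (Fin m → ℂ) →ₗ[ℂ] ℂ where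
  toFun z := hf m p z w
  map_add' x y := by
    unfold hf
    simp only [← Finset.sum_add_distrib]
    exact Finset.sum_congr rfl fun j _ => by split_ifs <;> simp <;> ring
  map_smul' c x := by
    unfold hf
    simp only [RingHom.id_apply, smul_eq_mul, Finset.mul_sum]
    exact Finset.sum_congr rfl fun j _ => by split_ifs <;> simp <;> ring

lemma hphi_apply (w z : Fin m → ℂ) : hphi m p w z = hf m p z w := rfl

lemma hf_zero_left (w : Fin m → ℂ) : hf m p 0 w = 0 := by simp [hf]

lemma hf_smul_left (c : ℂ) (z w : Fin m → ℂ) : hf m p (c • z) w = c * hf m p z w :=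
  (hphi m p w).map_smul c z

lemma hf_sum_left {ι : Type*} (s : Finset ι) (v : ι → Fin m → ℂ) (w : Fin m → ℂ) :
    hf m p (∑ i ∈ s, v i) w = ∑ i ∈ s, hf m p (v i) w :=
  map_sum (hphi m p w) v s

lemma hf_smul_right (c : ℂ) (z w : Fin m → ℂ) : hf m p z (c • w) = conj c * hf m p z w := by
  rw [← hf_conj, hf_smul_left, map_mul, hf_conj]

lemma hf_sum_right {ι : Type*} (s : Finset ι) (z : Fin m → ℂ) (v : ι → Fin m → ℂ) :
    hf m p z (∑ i ∈ s, v i) = ∑ i ∈ s, hf m p z (v i) := by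
  rw [← hf_conj, hf_sum_left, map_sum]
  exact Finset.sum_congr rfl fun j _ => hf_conj _ _

lemma hf_self_re (z : Fin m → ℂ) : (hf m p z z) = ((hf m p z z).re : ℂ) :=
  (Complex.conj_eq_iff_re.mp (hf_conj z z)).symm

lemma hf_self_ne_re (z : Fin m → ℂ) (h : hf m p z z ≠ 0) : (hf m p z z).re ≠ 0 := by
  intro h0
  exact h (by rw [hf_self_re z, h0]; simp)

noncomputable def tauv (m p : ℕ) (z : Fin m → ℂ) : Fin m → ℂ :=
  fun j => (if (j : ℕ) < p then 1 else -1) * conj (z j)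

lemma hf_tau_right (z w : Fin m → ℂ) : hf m p z (tauv m p w) = bf m z w := by
  unfold hf tauv bf
  refine Finset.sum_congr rfl fun j _ => ?_
  split_ifs <;> simp <;> ring

lemma hf_tau_left (z w : Fin m → ℂ) : hf m p (tauv m p z) w = conj (bf m z w) := by
  unfold hf tauv bf
  rw [map_sum]
  refine Finset.sum_congr rfl fun j _ => ?_
  split_ifs <;> simp <;> ring

lemma bf_tau (z w : Fin m → ℂ) : bf m z (tauv m p w) = hf m p z w := by
  unfold hf tauv bf
  exact Finset.sum_congr rfl fun j _ => by ring

lemma hf_tau_tau (z w : Fin m → ℂ) : hf m p (tauv m p z) (tauv m p w) = conj (hf m p z w) := by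
  rw [hf_tau_left, bf_tau]

lemma hf_nondeg (z : Fin m → ℂ) (h : ∀ w, hf m p z w = 0) : z = 0 := by
  have h1 := h (fun j => (if (j : ℕ) < p then 1 else -1) * z j)
  unfold hf at h1
  have h2 : ∑ j, (Complex.normSq (z j) : ℂ) = 0 := by
    rw [← h1]
    refine Finset.sum_congr rfl fun j _ => ?_
    simp only []
    split_ifs with hj <;> simp [hj, Complex.mul_conj] <;> ring
  have h3 : ∑ j, Complex.normSq (z j) = 0 := by
    have := congrArg Complex.re h2
    simpa using this
  funext j
  have := (Finset.sum_eq_zero_iff_of_nonneg (fun i _ => Complex.normSq_nonneg (z i))).mp h3 j (Finset.mem_univ j)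
  simpa using this

lemma gram_li {ι : Type*} [Fintype ι] [DecidableEq ι] (g : ι → Fin m → ℂ)
    (horth : ∀ i j, i ≠ j → hf m p (g i) (g j) = 0) (hdiag : ∀ i, hf m p (g i) (g i) ≠ 0) :
    LinearIndependent ℂ g := by
  rw [linearIndependent_iff']
  intro s c hsum i hi
  have h1 : hf m p (∑ j ∈ s, c j • g j) (g i) = 0 := by rw [hsum]; exact hf_zero_left _
  rw [hf_sum_left] at h1
  have h2 : ∀ j ∈ s, j ≠ i → hf m p (c j • g j) (g i) = 0 := fun j _ hj => by
    rw [hf_smul_left, horth j i hj, mul_zero]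
  rw [Finset.sum_eq_single_of_mem i hi (fun j hj hji => h2 j hj hji), hf_smul_left] at h1
  exact (mul_eq_zero.mp h1).resolve_right (hdiag i)

lemma hf_add_left (x y w : Fin m → ℂ) : hf m p (x + y) w = hf m p x w + hf m p y w :=
  (hphi m p w).map_add x y

lemma hf_add_right (z x y : Fin m → ℂ) : hf m p z (x + y) = hf m p z x + hf m p z y := by
  rw [← hf_conj, hf_add_left, map_add, hf_conj, hf_conj]

lemma hf_sub_left (x y w : Fin m → ℂ) : hf m p (x - y) w = hf m p x w - hf m p y w :=
  (hphi m p w).map_sub x y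

lemma exists_anisotropic (W : Submodule ℂ (Fin m → ℂ)) (hW : W ≠ ⊥)
    (hnd : ∀ w ∈ W, (∀ u ∈ W, hf m p w u = 0) → w = 0) :
    ∃ w ∈ W, hf m p w w ≠ 0 := by
  by_contra hcon
  push_neg at hcon
  obtain ⟨w0, hw0, hw0ne⟩ := Submodule.exists_mem_ne_zero_of_ne_bot hW
  apply hw0ne
  apply hnd w0 hw0
  intro u hu
  set a := hf m p w0 u with ha
  have h1 : hf m p (w0 + a • u) (w0 + a • u) = 0 :=
    hcon _ (W.add_mem hw0 (W.smul_mem a hu))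
  rw [hf_add_left, hf_add_right, hf_add_right, hf_smul_left, hf_smul_left, hf_smul_right,
    hf_smul_right, hcon w0 hw0, hcon u hu] at h1
  have h2 : hf m p u w0 = conj a := by rw [ha, hf_conj]
  rw [h2, ← ha] at h1
  have h3 : a * conj a = 0 := by linear_combination h1 / 2
  rcases mul_eq_zero.mp h3 with h | h
  · exact h
  · simpa using congrArg conj h

open Module in
lemma orthog : ∀ (k : ℕ) (W : Submodule ℂ (Fin m → ℂ)),
    (∀ w ∈ W, (∀ u ∈ W, hf m p w u = 0) → w = 0) → finrank ℂ W = k →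
    ∃ f : Fin k → (Fin m → ℂ), (∀ i, f i ∈ W) ∧
      (∀ i j, i ≠ j → hf m p (f i) (f j) = 0) ∧ (∀ i, hf m p (f i) (f i) ≠ 0) := by
  intro k
  induction k with
  | zero =>
    intro W _ _
    exact ⟨fun i => i.elim0, fun i => i.elim0, fun i => i.elim0, fun i => i.elim0⟩
  | succ k ih =>
    intro W hnd hdim
    have hWbot : W ≠ ⊥ := by
      intro h
      rw [h, finrank_bot] at hdim
      exact Nat.succ_ne_zero k hdim.symm
    obtain ⟨w, hwW, hww⟩ := exists_anisotropic W hWbot hnd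
    set W' := W ⊓ LinearMap.ker (hphi m p w) with hW'def
    have hW'le : W' ≤ W := inf_le_left
    have hmemW' : ∀ x, x ∈ W' ↔ x ∈ W ∧ hf m p x w = 0 := fun x => by
      rw [hW'def, Submodule.mem_inf, LinearMap.mem_ker, hphi_apply]
    have hdecomp : ∀ x ∈ W, x - (hf m p x w / hf m p w w) • w ∈ W' := by
      intro x hx
      rw [hmemW']
      constructor
      · exact W.sub_mem hx (W.smul_mem _ hwW)
      · rw [hf_sub_left, hf_smul_left, div_mul_cancel₀ _ hww, sub_self]
    have hwnW' : w ∉ W' := fun h => hww ((hmemW' w).mp h).2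
    have hlt : W' < W := lt_of_le_of_ne hW'le (fun h => hwnW' (h ▸ hwW))
    have h1 : finrank ℂ ↥W' < k + 1 := hdim ▸ Submodule.finrank_lt_finrank_of_lt hlt
    have h2 : W ≤ W' ⊔ (ℂ ∙ w) := by
      intro x hx
      have hx' := hdecomp x hx
      have : x = (x - (hf m p x w / hf m p w w) • w) + (hf m p x w / hf m p w w) • w := by ring_nf
      rw [this]
      exact Submodule.add_mem_sup hx' (Submodule.mem_span_singleton.mpr ⟨_, rfl⟩)
    have h3 : finrank ℂ ↥W ≤ finrank ℂ ↥W' + 1 := by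
      calc finrank ℂ ↥W ≤ finrank ℂ ↥(W' ⊔ (ℂ ∙ w)) := Submodule.finrank_mono h2
        _ ≤ finrank ℂ ↥W' + finrank ℂ ↥(ℂ ∙ w) := Submodule.finrank_add_le_finrank_add_finrank _ _
        _ = finrank ℂ ↥W' + 1 := by rw [finrank_span_singleton (by rintro rfl; exact hww (hf_zero_left _))]
    have hdim' : finrank ℂ ↥W' = k := by omega
    have hnd' : ∀ z ∈ W', (∀ u ∈ W', hf m p z u = 0) → z = 0 := by
      intro z hz hzu
      apply hnd z (hW'le hz)
      intro u hu
      have hu' := hdecomp u hu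
      have hzw : hf m p z w = 0 := ((hmemW' z).mp hz).2
      have e1 : hf m p z (u - (hf m p u w / hf m p w w) • w) = 0 := hzu _ hu'
      have e2 : u - (hf m p u w / hf m p w w) • w = u + (-(hf m p u w / hf m p w w)) • w := by
        rw [neg_smul, ← sub_eq_add_neg]
      rw [e2, hf_add_right, hf_smul_right, hzw, mul_zero, add_zero] at e1
      exact e1
    obtain ⟨f', hf'W, hf'orth, hf'diag⟩ := ih W' hnd' hdim'
    refine ⟨Fin.cons w f', ?_, ?_, ?_⟩
    · intro i
      refine Fin.cases ?_ ?_ i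
      · simpa using hwW
      · intro j; simpa using hW'le (hf'W j)
    · intro i j
      refine Fin.cases ?_ ?_ i
      · refine Fin.cases ?_ ?_ j
        · intro hij; exact absurd rfl hij
        · intro j' _
          simp only [Fin.cons_zero, Fin.cons_succ]
          rw [← hf_conj]
          have h0 : hf m p (f' j') w = 0 := ((hmemW' _).mp (hf'W j')).2
          rw [h0, map_zero]
      · intro i'
        refine Fin.cases ?_ ?_ j
        · intro _
          simp only [Fin.cons_zero, Fin.cons_succ]
          exact ((hmemW' _).mp (hf'W i')).2
        · intro j' hij
          simp only [Fin.cons_succ]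
          exact hf'orth i' j' (fun h => hij (congrArg Fin.succ h))
    · intro i
      refine Fin.cases ?_ ?_ i
      · simpa using hww
      · intro i'; simpa using hf'diag i'

lemma hf_lincomb {ι : Type*} [Fintype ι] [DecidableEq ι] (g : ι → Fin m → ℂ)
    (horth : ∀ i j, i ≠ j → hf m p (g i) (g j) = 0) (c : ι → ℂ) :
    hf m p (∑ i, c i • g i) (∑ i, c i • g i)
      = ∑ i, (Complex.normSq (c i) : ℂ) * hf m p (g i) (g i) := by
  rw [hf_sum_left]
  refine Finset.sum_congr rfl fun i _ => ?_
  rw [hf_smul_left, hf_sum_right]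
  rw [Finset.sum_eq_single_of_mem i (Finset.mem_univ i)
    (fun j _ hji => by rw [hf_smul_right, horth i j (Ne.symm hji), mul_zero])]
  rw [hf_smul_right, ← mul_assoc, Complex.mul_conj]

open Module in
lemma span_coords {ι : Type*} [Fintype ι] (g : ι → Fin m → ℂ)
    (hli : LinearIndependent ℂ g) (d : ℕ) (e : Fin d → Fin m)
    (hcard : d < Fintype.card ι) :
    ∃ z, z ∈ Submodule.span ℂ (Set.range g) ∧ z ≠ 0 ∧ ∀ j, z (e j) = 0 := by
  set V' := Submodule.span ℂ (Set.range g) with hV'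
  have hrk : finrank ℂ V' = Fintype.card ι := finrank_span_eq_card hli
  set L := (LinearMap.funLeft ℂ ℂ e).domRestrict V' with hL
  have hrn := LinearMap.finrank_range_add_finrank_ker L
  have hr : finrank ℂ (LinearMap.range L) ≤ d :=
    le_trans (Submodule.finrank_le _) (by simp [Module.finrank_pi])
  have hker : 0 < finrank ℂ (LinearMap.ker L) := by omega
  have : Nontrivial (LinearMap.ker L) := Module.finrank_pos_iff.mp hker
  obtain ⟨z0, hz0ne⟩ := exists_ne (0 : LinearMap.ker L)
  have hy : L z0.1 = 0 := LinearMap.mem_ker.mp z0.2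
  refine ⟨(z0.1 : Fin m → ℂ), z0.1.2, ?_, ?_⟩
  · intro h
    exact hz0ne (Subtype.ext (Subtype.ext h))
  · intro j
    have hy' : (LinearMap.funLeft ℂ ℂ e) ((z0.1 : Fin m → ℂ)) = 0 := hy
    exact congrFun hy' j

lemma coords_nonpos (z : Fin m → ℂ) (h : ∀ j : Fin m, (j : ℕ) < p → z j = 0) :
    (hf m p z z).re ≤ 0 := by
  unfold hf
  rw [Complex.re_sum]
  refine Finset.sum_nonpos fun j _ => ?_
  by_cases hj : (j : ℕ) < p
  · simp [h j hj]
  · simp only [hj, if_false]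
    have : z j * -1 * conj (z j) = -(Complex.normSq (z j) : ℂ) := by
      rw [← Complex.mul_conj]; ring
    rw [this]
    simp [Complex.normSq_nonneg]

lemma coords_nonneg (z : Fin m → ℂ) (h : ∀ j : Fin m, ¬ ((j : ℕ) < p) → z j = 0) :
    0 ≤ (hf m p z z).re := by
  unfold hf
  rw [Complex.re_sum]
  refine Finset.sum_nonneg fun j _ => ?_
  by_cases hj : (j : ℕ) < p
  · simp only [hj, if_true]
    have : z j * 1 * conj (z j) = (Complex.normSq (z j) : ℂ) := by
      rw [← Complex.mul_conj]; ring
    rw [this]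
    simp [Complex.normSq_nonneg]
  · simp [h j hj]

set_option maxHeartbeats 1000000

open Module Finset in
lemma bound_pos {ι : Type*} [Fintype ι] [DecidableEq ι] (hpm : p ≤ m)
    (hcard : Fintype.card ι = m) (g : ι → Fin m → ℂ)
    (horth : ∀ i j, i ≠ j → hf m p (g i) (g j) = 0)
    (hdiag : ∀ i, hf m p (g i) (g i) ≠ 0) :
    (univ.filter fun i => 0 < (hf m p (g i) (g i)).re).card ≤ p := by
  classical
  by_contra hgt
  push_neg at hgt
  set P := univ.filter fun i => 0 < (hf m p (g i) (g i)).re with hP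
  have horth' : ∀ i j : {i : ι // i ∈ P}, i ≠ j → hf m p (g i.1) (g j.1) = 0 :=
    fun i j hij => horth i.1 j.1 (fun h => hij (Subtype.ext h))
  have hli : LinearIndependent ℂ (fun i : {i : ι // i ∈ P} => g i.1) :=
    gram_li _ horth' (fun i => hdiag i.1)
  obtain ⟨z, hzspan, hzne, hzcoord⟩ :=
    span_coords (fun i : {i : ι // i ∈ P} => g i.1) hli p (Fin.castLE hpm)
      (by rw [Fintype.card_coe]; omega)
  obtain ⟨c, hc⟩ := (Submodule.mem_span_range_iff_exists_fun ℂ).mp hzspan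
  have hzz : hf m p z z
      = ∑ i : {i : ι // i ∈ P}, (Complex.normSq (c i) : ℂ) * hf m p (g i.1) (g i.1) := by
    rw [← hc]
    exact hf_lincomb _ horth' c
  have hterm : ∀ i : {i : ι // i ∈ P},
      (((Complex.normSq (c i) : ℂ)) * hf m p (g i.1) (g i.1)).re
        = Complex.normSq (c i) * (hf m p (g i.1) (g i.1)).re := fun i => by
    simp [Complex.mul_re]
  have hpos : 0 < (hf m p z z).re := by
    rw [hzz, Complex.re_sum]
    obtain ⟨i0, hi0⟩ : ∃ i : {i : ι // i ∈ P}, c i ≠ 0 := by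
      by_contra hall
      push_neg at hall
      apply hzne
      rw [← hc]
      simp [hall]
    refine Finset.sum_pos' (fun i _ => ?_) ⟨i0, Finset.mem_univ i0, ?_⟩
    · rw [hterm i]
      exact mul_nonneg (Complex.normSq_nonneg _)
        (le_of_lt (Finset.mem_filter.mp i.2).2)
    · rw [hterm i0]
      exact mul_pos (Complex.normSq_pos.mpr hi0) (Finset.mem_filter.mp i0.2).2
  have hnonpos : (hf m p z z).re ≤ 0 := by
    refine coords_nonpos z fun j hj => ?_
    have h1 := hzcoord ⟨(j : ℕ), hj⟩
    have he : Fin.castLE hpm ⟨(j : ℕ), hj⟩ = j := by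
      apply Fin.ext
      rfl
    rwa [he] at h1
  linarith

open Module Finset in
lemma bound_neg {ι : Type*} [Fintype ι] [DecidableEq ι] (hpm : p ≤ m)
    (hcard : Fintype.card ι = m) (g : ι → Fin m → ℂ)
    (horth : ∀ i j, i ≠ j → hf m p (g i) (g j) = 0)
    (hdiag : ∀ i, hf m p (g i) (g i) ≠ 0) :
    (univ.filter fun i => (hf m p (g i) (g i)).re < 0).card ≤ m - p := by
  classical
  by_contra hgt
  push_neg at hgt
  set N := univ.filter fun i => (hf m p (g i) (g i)).re < 0 with hN
  have horth' : ∀ i j : {i : ι // i ∈ N}, i ≠ j → hf m p (g i.1) (g j.1) = 0 :=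
    fun i j hij => horth i.1 j.1 (fun h => hij (Subtype.ext h))
  have hli : LinearIndependent ℂ (fun i : {i : ι // i ∈ N} => g i.1) :=
    gram_li _ horth' (fun i => hdiag i.1)
  obtain ⟨z, hzspan, hzne, hzcoord⟩ :=
    span_coords (fun i : {i : ι // i ∈ N} => g i.1) hli (m - p)
      (fun j => (⟨p + (j : ℕ), by have := j.2; omega⟩ : Fin m))
      (by rw [Fintype.card_coe]; omega)
  obtain ⟨c, hc⟩ := (Submodule.mem_span_range_iff_exists_fun ℂ).mp hzspan
  have hzz : hf m p z z
      = ∑ i : {i : ι // i ∈ N}, (Complex.normSq (c i) : ℂ) * hf m p (g i.1) (g i.1) := by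
    rw [← hc]
    exact hf_lincomb _ horth' c
  have hterm : ∀ i : {i : ι // i ∈ N},
      (((Complex.normSq (c i) : ℂ)) * hf m p (g i.1) (g i.1)).re
        = Complex.normSq (c i) * (hf m p (g i.1) (g i.1)).re := fun i => by
    simp [Complex.mul_re]
  have hneg : (hf m p z z).re < 0 := by
    have h0 : 0 < -(hf m p z z).re := by
      rw [hzz, Complex.re_sum, ← Finset.sum_neg_distrib]
      obtain ⟨i0, hi0⟩ : ∃ i : {i : ι // i ∈ N}, c i ≠ 0 := by
        by_contra hall
        push_neg at hall
        apply hzne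
        rw [← hc]
        simp [hall]
      refine Finset.sum_pos' (fun i _ => ?_) ⟨i0, Finset.mem_univ i0, ?_⟩
      · rw [hterm i, neg_nonneg]
        exact mul_nonpos_of_nonneg_of_nonpos (Complex.normSq_nonneg _)
          (le_of_lt (Finset.mem_filter.mp i.2).2)
      · rw [hterm i0, neg_pos]
        exact mul_neg_of_pos_of_neg (Complex.normSq_pos.mpr hi0)
          (Finset.mem_filter.mp i0.2).2
    linarith
  have hnonneg : 0 ≤ (hf m p z z).re := by
    refine coords_nonneg z fun j hj => ?_
    have hj' : p ≤ (j : ℕ) := not_lt.mp hj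
    have hjm : (j : ℕ) - p < m - p := by have := j.2; omega
    have h1 := hzcoord ⟨(j : ℕ) - p, hjm⟩
    have he : (⟨p + ((j : ℕ) - p), by have := j.2; omega⟩ : Fin m) = j := by
      apply Fin.ext
      simp only []
      omega
    rwa [he] at h1
  linarith

open Module Finset in
lemma sylv {ι : Type*} [Fintype ι] [DecidableEq ι] (hpm : p ≤ m)
    (hcard : Fintype.card ι = m) (g : ι → Fin m → ℂ)
    (horth : ∀ i j, i ≠ j → hf m p (g i) (g j) = 0)
    (hdiag : ∀ i, hf m p (g i) (g i) ≠ 0) :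
    (univ.filter fun i => 0 < (hf m p (g i) (g i)).re).card = p ∧
    (univ.filter fun i => (hf m p (g i) (g i)).re < 0).card = m - p := by
  classical
  have hre : ∀ i, (hf m p (g i) (g i)).re ≠ 0 := fun i => hf_self_ne_re _ (hdiag i)
  have h1 := Finset.card_filter_add_card_filter_not
    (s := (univ : Finset ι)) (p := fun i => 0 < (hf m p (g i) (g i)).re)
  have h2 : univ.filter (fun i => ¬ 0 < (hf m p (g i) (g i)).re)
      = univ.filter (fun i => (hf m p (g i) (g i)).re < 0) := by
    apply Finset.filter_congr
    intro i _
    simp only [not_lt]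
    exact ⟨fun h => lt_of_le_of_ne h (hre i), fun h => le_of_lt h⟩
  rw [h2, Finset.card_univ, hcard] at h1
  have hPle := bound_pos hpm hcard g horth hdiag
  have hNle := bound_neg hpm hcard g horth hdiag
  exact ⟨by omega, by omega⟩


open Module Finset in
lemma main_aux (k p q m : ℕ) (hmk : m = 2 * k + 1) (hpq : p + q = m) (hp : Even p)
    (W : Submodule ℂ (Fin m → ℂ))
    (hiso : ∀ w ∈ W, ∀ w' ∈ W, bf m w w' = 0)
    (hdim : Module.finrank ℂ W = k)
    (hnondeg : ∀ w ∈ W, (∀ u ∈ W, hf m p w u = 0) → w = 0) :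
    ∃ f : Fin k → (Fin m → ℂ),
      (∀ i, f i ∈ W) ∧ LinearIndependent ℂ f ∧
      (∀ i j, i ≠ j → hf m p (f i) (f j) = 0) ∧
      (Finset.univ.filter fun i => 0 < (hf m p (f i) (f i)).re).card = p / 2 ∧
      (Finset.univ.filter fun i => (hf m p (f i) (f i)).re < 0).card = (q - 1) / 2 := by
  classical
  have hpm : p ≤ m := by omega
  obtain ⟨f, hfW, horthf, hdiagf⟩ := orthog k W hnondeg hdim
  let w2 : Fin k ⊕ Fin k → Fin m → ℂ := Sum.elim f (fun i => tauv m p (f i))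
  have horth2 : ∀ i j : Fin k ⊕ Fin k, i ≠ j → hf m p (w2 i) (w2 j) = 0 := by
    rintro (i | i) (j | j) hij
    · exact horthf i j (fun h => hij (congrArg Sum.inl h))
    · show hf m p (f i) (tauv m p (f j)) = 0
      rw [hf_tau_right]
      exact hiso _ (hfW i) _ (hfW j)
    · show hf m p (tauv m p (f i)) (f j) = 0
      rw [hf_tau_left, hiso _ (hfW i) _ (hfW j), map_zero]
    · show hf m p (tauv m p (f i)) (tauv m p (f j)) = 0
      rw [hf_tau_tau, horthf i j (fun h => hij (congrArg Sum.inr h)), map_zero]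
  have hdiag2 : ∀ i : Fin k ⊕ Fin k, hf m p (w2 i) (w2 i) ≠ 0 := by
    rintro (i | i)
    · exact hdiagf i
    · show hf m p (tauv m p (f i)) (tauv m p (f i)) ≠ 0
      rw [hf_tau_tau]
      simpa using hdiagf i
  -- find u
  let L : (Fin m → ℂ) →ₗ[ℂ] (Fin k ⊕ Fin k → ℂ) := LinearMap.pi (fun i => hphi m p (w2 i))
  have hrn := LinearMap.finrank_range_add_finrank_ker L
  have hr : finrank ℂ (LinearMap.range L) ≤ 2 * k :=
    le_trans (Submodule.finrank_le _) (by simp [Module.finrank_pi]; omega)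
  have hfull : finrank ℂ (Fin m → ℂ) = m := by simp [Module.finrank_pi]
  have hker : 0 < finrank ℂ (LinearMap.ker L) := by
    rw [hfull] at hrn
    omega
  have : Nontrivial (LinearMap.ker L) := Module.finrank_pos_iff.mp hker
  obtain ⟨u0, hu0ne⟩ := exists_ne (0 : LinearMap.ker L)
  set u := (u0 : Fin m → ℂ) with hudef
  have hune : u ≠ 0 := fun h => hu0ne (Subtype.ext h)
  have huorth : ∀ i : Fin k ⊕ Fin k, hf m p u (w2 i) = 0 := by
    intro i
    have h0 : L u = 0 := LinearMap.mem_ker.mp u0.2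
    exact congrFun h0 i
  have huorth' : ∀ i : Fin k ⊕ Fin k, hf m p (w2 i) u = 0 := by
    intro i
    rw [← hf_conj, huorth i, map_zero]
  have hli2 : LinearIndependent ℂ w2 := gram_li w2 horth2 hdiag2
  have huu : hf m p u u ≠ 0 := by
    intro h0
    have hunspan : u ∉ Submodule.span ℂ (Set.range w2) := by
      intro hspan
      obtain ⟨c, hc⟩ := (Submodule.mem_span_range_iff_exists_fun ℂ).mp hspan
      have hcz : ∀ j, c j = 0 := by
        intro j
        have h1 : hf m p (w2 j) u = 0 := huorth' j
        rw [← hc, hf_sum_right] at h1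
        rw [Finset.sum_eq_single_of_mem j (Finset.mem_univ j)
          (fun i _ hij => by rw [hf_smul_right, horth2 j i (Ne.symm hij), mul_zero]),
          hf_smul_right] at h1
        have := (mul_eq_zero.mp h1).resolve_right (hdiag2 j)
        simpa using congrArg conj this
      apply hune
      rw [← hc]
      simp [hcz]
    have hliG : LinearIndependent ℂ
        (fun o => Option.casesOn' o u w2 : Option (Fin k ⊕ Fin k) → Fin m → ℂ) :=
      hli2.option hunspan
    have hspanG : Submodule.span ℂ
        (Set.range (fun o => Option.casesOn' o u w2 : Option (Fin k ⊕ Fin k) → Fin m → ℂ)) = ⊤ :=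
      hliG.span_eq_top_of_card_eq_finrank (by simp [hfull]; omega)
    have hz : ∀ z, hf m p u z = 0 := by
      intro z
      have hzmem : z ∈ Submodule.span ℂ
          (Set.range (fun o => Option.casesOn' o u w2 : Option (Fin k ⊕ Fin k) → Fin m → ℂ)) := by
        rw [hspanG]; trivial
      obtain ⟨c, hc⟩ := (Submodule.mem_span_range_iff_exists_fun ℂ).mp hzmem
      rw [← hc, hf_sum_right]
      refine Finset.sum_eq_zero fun o _ => ?_
      rw [hf_smul_right]
      rcases o with _ | i
      · show conj (c none) * hf m p u u = 0
        rw [h0, mul_zero]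
      · show conj (c (some i)) * hf m p u (w2 i) = 0
        rw [huorth i, mul_zero]
    exact hune (hf_nondeg u hz)
  -- Sylvester
  let G : Option (Fin k ⊕ Fin k) → Fin m → ℂ := fun o => Option.casesOn' o u w2
  have hGorth : ∀ i j, i ≠ j → hf m p (G i) (G j) = 0 := by
    rintro (_ | i) (_ | j) hij
    · exact absurd rfl hij
    · exact huorth j
    · exact huorth' i
    · exact horth2 i j (fun h => hij (congrArg some h))
  have hGdiag : ∀ i, hf m p (G i) (G i) ≠ 0 := by
    rintro (_ | i)
    · exact huu
    · exact hdiag2 i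
  obtain ⟨hPos, hNeg⟩ := sylv hpm (by simp; omega) G hGorth hGdiag
  have hcf : ∀ (pred : ℝ → Prop) [DecidablePred pred],
      (univ.filter fun o => pred ((hf m p (G o) (G o)).re)).card
        = ((if pred ((hf m p u u).re) then 1 else 0) : ℕ)
          + ((univ.filter fun i : Fin k => pred ((hf m p (f i) (f i)).re)).card
             + (univ.filter fun i : Fin k => pred ((hf m p (f i) (f i)).re)).card) := by
    intro pred _
    simp only [Finset.card_filter]
    rw [Fintype.sum_option, Fintype.sum_sum_type]
    have e1 : ∀ i : Fin k,
        (if pred ((hf m p (G (some (Sum.inr i))) (G (some (Sum.inr i)))).re) then (1:ℕ) else 0)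
          = (if pred ((hf m p (f i) (f i)).re) then 1 else 0) := fun i => by
      have he : hf m p (G (some (Sum.inr i))) (G (some (Sum.inr i)))
          = conj (hf m p (f i) (f i)) := hf_tau_tau _ _
      rw [he, Complex.conj_re]
    rw [Finset.sum_congr rfl (fun i _ => e1 i)]
    rfl
  have hu0 : (hf m p u u).re ≠ 0 := hf_self_ne_re _ huu
  have hPval : (if 0 < (hf m p u u).re then (1:ℕ) else 0)
      + ((univ.filter fun i : Fin k => 0 < (hf m p (f i) (f i)).re).card
         + (univ.filter fun i : Fin k => 0 < (hf m p (f i) (f i)).re).card) = p :=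
    (hcf (fun x => 0 < x)).symm.trans hPos
  have hNval : (if (hf m p u u).re < 0 then (1:ℕ) else 0)
      + ((univ.filter fun i : Fin k => (hf m p (f i) (f i)).re < 0).card
         + (univ.filter fun i : Fin k => (hf m p (f i) (f i)).re < 0).card) = m - p :=
    (hcf (fun x => x < 0)).symm.trans hNeg
  obtain ⟨t, ht⟩ := hp
  by_cases hsign : 0 < (hf m p u u).re
  · rw [if_pos hsign] at hPval
    omega
  · have hneg2 : (hf m p u u).re < 0 := lt_of_le_of_ne (not_lt.mp hsign) hu0
    rw [if_neg hsign] at hPval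
    rw [if_pos hneg2] at hNval
    refine ⟨f, hfW, gram_li f horthf hdiagf, horthf, ?_, ?_⟩ <;> omega

/-- For a generic `b`-isotropic `n`-plane `Ŵ` in `ℂ^{2n}`: if `W = Ŵ ∩ V` is
`h`-nondegenerate for a nondegenerate Hermitian form `h` of signature `(p,q)` on
`V = ℂ^{2n-1}` (`p + q = 2n - 1`, `p` even), then the restriction of `h` to `W` has
signature `(p/2, (q-1)/2)`: any `h`-orthogonal basis of `W` has exactly `p/2` positive and
`(q-1)/2` negative directions; here we assert the existence of such a basis with these
counts. -/
theorem stmt12 (n p q : ℕ) (hn : 0 < n) (hpq : p + q = 2 * n - 1) (hp : Even p)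
    (W : Submodule ℂ (Fin (2 * n - 1) → ℂ))
    (hiso : ∀ w ∈ W, ∀ w' ∈ W, bf (2 * n - 1) w w' = 0)
    (hdim : Module.finrank ℂ W = n - 1)
    (hnondeg : ∀ w ∈ W, (∀ u ∈ W, hf (2 * n - 1) p w u = 0) → w = 0) :
    ∃ f : Fin (n - 1) → (Fin (2 * n - 1) → ℂ),
      (∀ i, f i ∈ W) ∧ LinearIndependent ℂ f ∧
      (∀ i j, i ≠ j → hf (2 * n - 1) p (f i) (f j) = 0) ∧
      (Finset.univ.filter fun i => 0 < (hf (2 * n - 1) p (f i) (f i)).re).card = p / 2 ∧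
      (Finset.univ.filter fun i => (hf (2 * n - 1) p (f i) (f i)).re < 0).card = (q - 1) / 2 := by
  exact main_aux (n - 1) p q (2 * n - 1) (by omega) hpq hp W hiso hdim hnondeg
end
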